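/- arXiv:2309.05004 — 4 statements merged into one kernel-verified Lean document; each statement's English description precedes it below -/
import Mathlib

section
/- Let K be a step-function kernel K(x,v,v') = Σ_{r=1}^R K_r(v,v') 1_{I_r}(x) with intervals I₁ = (−∞, a₁), I_r = [a_{r−1}, a_r) for r = 2,…,R−1, I_R = [a_{R−1}, ∞), and 0 ≤ K ≤ C_K. Let φ : ℝ × V → [0, C_φ] be measurable and uniformly continuous in x uniformly in v (for every ε > 0 there is δ' > 0 such that |x−y| < δ' implies |φ(x,v) − φ(y,v)| < ε for all v ∈ V). Let f be a bounded measurable mild solution of the homogeneous kinetic equation with initial datum φ. Then f is uniformly continuous in x uniformly in (t,v): for every ε > 0 there is δ > 0 such that |x−y| < δ implies |f(t,x,v) − f(t,y,v)| ≤ ε for all t ∈ [0,T] and v ∈ V. -/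
open MeasureTheory Real Set Filter

noncomputable section

/-- Bounded measurable mild solution of the forward kinetic equation
`∂ₜ f + v ∂ₓ f = 𝒦(f) + h`, `f(0,·,·)=φ`, on `[0,T] × ℝ × {−1,1}` (velocity set `V = {−1,1}`
with counting measure). -/
def IsMildF (T : ℝ) (K : ℝ → ℝ → ℝ → ℝ) (φ : ℝ → ℝ → ℝ)
    (h f : ℝ → ℝ → ℝ → ℝ) : Prop :=
  (Measurable fun p : ℝ × ℝ × ℝ => f p.1 p.2.1 p.2.2) ∧
  (∃ C : ℝ, ∀ t x v, |f t x v| ≤ C) ∧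
  ∀ t ∈ Set.Icc (0 : ℝ) T, ∀ x : ℝ, ∀ v ∈ ({1, -1} : Set ℝ),
    f t x v = φ (x - v * t) v +
      ∫ s in (0 : ℝ)..t,
        (K (x - v * (t - s)) v 1 * f s (x - v * (t - s)) 1
          + K (x - v * (t - s)) v (-1) * f s (x - v * (t - s)) (-1)
          - (K (x - v * (t - s)) 1 v + K (x - v * (t - s)) (-1) v)
              * f s (x - v * (t - s)) v
          + h s (x - v * (t - s)) v)

/-- Mild solution (measurable, with finite `L¹ₓ` norms uniformly in `t,v`) of the backward
equation `−∂ₜ g − v ∂ₓ g = α L̃(g) − σ g + h`, `g(T,·,·)=ψ`, where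
`σ(x,v) = Σ_{v'∈V} K(x,v',v)` and `L̃(g)(t,x,v) = Σ_{v'∈V} K(x,v',v) g(t,x,v')`. -/
def IsMildG (T : ℝ) (K : ℝ → ℝ → ℝ → ℝ) (α : ℝ) (ψ : ℝ → ℝ → ℝ)
    (h g : ℝ → ℝ → ℝ → ℝ) : Prop :=
  (Measurable fun p : ℝ × ℝ × ℝ => g p.1 p.2.1 p.2.2) ∧
  (∀ t ∈ Set.Icc (0 : ℝ) T, ∀ v ∈ ({1, -1} : Set ℝ),
    Integrable (fun x => g t x v)) ∧
  (∃ C : ℝ, ∀ t ∈ Set.Icc (0 : ℝ) T, ∀ v ∈ ({1, -1} : Set ℝ),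
    (∫ x : ℝ, |g t x v|) ≤ C) ∧
  ∀ t ∈ Set.Icc (0 : ℝ) T, ∀ x : ℝ, ∀ v ∈ ({1, -1} : Set ℝ),
    g t x v = ψ (x + v * (T - t)) v +
      ∫ s in t..T,
        (α * (K (x + v * (s - t)) 1 v * g s (x + v * (s - t)) 1
              + K (x + v * (s - t)) (-1) v * g s (x + v * (s - t)) (-1))
          - (K (x + v * (s - t)) 1 v + K (x + v * (s - t)) (-1) v)
              * g s (x + v * (s - t)) v
          + h s (x + v * (s - t)) v)

/-- Bounded measurable mild solution of the backward/adjoint equation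
`−∂ₜ g − v ∂ₓ g = α L̃(g) − σ g + h`, `g(T,·,·)=ψ`. -/
def IsMildGb (T : ℝ) (K : ℝ → ℝ → ℝ → ℝ) (α : ℝ) (ψ : ℝ → ℝ → ℝ)
    (h g : ℝ → ℝ → ℝ → ℝ) : Prop :=
  (Measurable fun p : ℝ × ℝ × ℝ => g p.1 p.2.1 p.2.2) ∧
  (∃ C : ℝ, ∀ t x v, |g t x v| ≤ C) ∧
  ∀ t ∈ Set.Icc (0 : ℝ) T, ∀ x : ℝ, ∀ v ∈ ({1, -1} : Set ℝ),
    g t x v = ψ (x + v * (T - t)) v +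
      ∫ s in t..T,
        (α * (K (x + v * (s - t)) 1 v * g s (x + v * (s - t)) 1
              + K (x + v * (s - t)) (-1) v * g s (x + v * (s - t)) (-1))
          - (K (x + v * (s - t)) 1 v + K (x + v * (s - t)) (-1) v)
              * g s (x + v * (s - t)) v
          + h s (x + v * (s - t)) v)


lemma kernel_measurable (R : ℕ) (a : ℕ → ℝ) (K : ℝ → ℝ → ℝ → ℝ)
    (hK_step : ∀ x y : ℝ, (∀ r ∈ Finset.Icc 1 (R - 1), (a r ≤ x ↔ a r ≤ y)) →
      ∀ v v', K x v v' = K y v v') (w w' : ℝ) :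
    Measurable fun x => K x w w' := by
  classical
  let P : ℝ → ((Finset.Icc 1 (R-1) : Finset ℕ) → Bool) := fun x r => decide (a r ≤ x)
  have hPm : Measurable P := by
    apply measurable_pi_lambda
    intro r
    have h : (fun x : ℝ => decide (a (r:ℕ) ≤ x)) = fun x => if a (r:ℕ) ≤ x then true else false := by
      funext x; by_cases hx : a (r:ℕ) ≤ x <;> simp [hx]
    rw [show (fun x : ℝ => P x r) = fun x : ℝ => decide (a (r:ℕ) ≤ x) from rfl, h]
    exact Measurable.ite measurableSet_Ici measurable_const measurable_const
  have key : (fun x => K x w w') = (fun S : (Finset.Icc 1 (R-1) : Finset ℕ) → Bool =>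
      if hS : ∃ x, P x = S then K hS.choose w w' else 0) ∘ P := by
    funext x
    have hex : ∃ y, P y = P x := ⟨x, rfl⟩
    simp only [Function.comp_apply, dif_pos hex]
    refine hK_step _ _ (fun r hr => ?_) w w'
    have h2 := congrFun hex.choose_spec (⟨r, hr⟩ : (Finset.Icc 1 (R-1) : Finset ℕ))
    simp only [P, decide_eq_decide] at h2
    exact h2.symm
  rw [key]
  exact (measurable_of_countable _).comp hPm

lemma bdd_intervalIntegrable {f : ℝ → ℝ} (hm : Measurable f) (C : ℝ)
    (hb : ∀ s, |f s| ≤ C) (t₀ t₁ : ℝ) : IntervalIntegrable f volume t₀ t₁ := by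
  rw [intervalIntegrable_iff]
  refine Integrable.mono' (g := fun _ => C) ?_ hm.aestronglyMeasurable
    (Eventually.of_forall fun s => by simpa using hb s)
  exact integrableOn_const measure_Ioc_lt_top.ne

lemma int_pow_fact (c t : ℝ) (k : ℕ) :
    ∫ s in (0:ℝ)..t, c * ((c*s)^k / (Nat.factorial k)) = (c*t)^(k+1) / (Nat.factorial (k+1)) := by
  have h : ∀ s:ℝ, c * ((c*s)^k / (Nat.factorial k)) = (c^(k+1) / (Nat.factorial k)) * s^k := fun s => by
    rw [mul_pow]; ring
  rw [intervalIntegral.integral_congr (g := fun s : ℝ => (c^(k+1) / (Nat.factorial k)) * s^k)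
    (fun s _ => h s)]
  rw [intervalIntegral.integral_const_mul, integral_pow]
  have hk : (Nat.factorial k : ℝ) ≠ 0 := Nat.cast_ne_zero.2 (Nat.factorial_ne_zero k)
  have hk1 : ((k:ℝ) + 1) ≠ 0 := by positivity
  rw [mul_pow, Nat.factorial_succ, zero_pow (Nat.succ_ne_zero k), sub_zero, div_mul_div_comm]
  push_cast
  ring

set_option maxHeartbeats 1000000 in
/-- if the kernel is a step function in `x` (piecewise constant with respect to
the partition `(−∞,a₁), [a₁,a₂), …, [a_{R−1},∞)`) and the initial datum `φ` with values in
`[0,C_φ]` is uniformly continuous in `x` uniformly in `v`, then every bounded measurable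
mild solution `f` of the homogeneous kinetic equation is uniformly continuous in `x`,
uniformly in `(t,v) ∈ [0,T] × V`. -/
theorem uniform_continuity_propagation
    (T CK Cφ : ℝ) (hT : 0 < T) (hCK : 0 < CK) (hCφ : 0 ≤ Cφ)
    (R : ℕ) (hR : 1 ≤ R) (a : ℕ → ℝ)
    (ha : StrictMonoOn a (Set.Icc 1 (R - 1)))
    (K : ℝ → ℝ → ℝ → ℝ)
    (hK_step : ∀ x y : ℝ, (∀ r ∈ Finset.Icc 1 (R - 1), (a r ≤ x ↔ a r ≤ y)) →
      ∀ v v', K x v v' = K y v v')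
    (hK_nonneg : ∀ x v v', 0 ≤ K x v v')
    (hK_bdd : ∀ x v v', K x v v' ≤ CK)
    (φ : ℝ → ℝ → ℝ)
    (hφ_meas : Measurable fun p : ℝ × ℝ => φ p.1 p.2)
    (hφ_bds : ∀ x : ℝ, ∀ v ∈ ({1, -1} : Set ℝ), 0 ≤ φ x v ∧ φ x v ≤ Cφ)
    (hφ_uc : ∀ ε > (0 : ℝ), ∃ δ > (0 : ℝ), ∀ x y : ℝ, |x - y| < δ →
      ∀ v ∈ ({1, -1} : Set ℝ), |φ x v - φ y v| < ε)
    (f : ℝ → ℝ → ℝ → ℝ)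
    (hf : IsMildF T K φ (fun _ _ _ => 0) f) :
    ∀ ε > (0 : ℝ), ∃ δ > (0 : ℝ), ∀ t ∈ Set.Icc (0 : ℝ) T, ∀ v ∈ ({1, -1} : Set ℝ),
      ∀ x y : ℝ, |x - y| < δ → |f t x v - f t y v| ≤ ε := by
  classical
  obtain ⟨hf_meas, ⟨C0, hC0⟩, hf_eq⟩ := hf
  obtain ⟨M, hMdef⟩ : ∃ _z : ℝ, _z = max C0 0 := ⟨_, rfl⟩
  have hM0 : 0 ≤ M := by rw [hMdef]; exact le_max_right _ _
  have hM : ∀ t x v, |f t x v| ≤ M := fun t x v => le_trans (hC0 t x v) (by rw [hMdef]; exact le_max_left _ _)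
  have hKmeas : ∀ w w', Measurable fun x => K x w w' := kernel_measurable R a K hK_step
  obtain ⟨c, hc⟩ : ∃ _z : ℝ, _z = 4 * CK := ⟨_, rfl⟩
  have hc0 : 0 < c := by rw [hc]; positivity
  obtain ⟨Q, hQ⟩ : ∃ _z : ℝ → ℝ → ℝ → ℝ, _z = fun v s w =>
      K w v 1 * f s w 1 + K w v (-1) * f s w (-1) - (K w 1 v + K w (-1) v) * f s w v := ⟨_, rfl⟩
  have hQm : ∀ v : ℝ, Measurable fun p : ℝ × ℝ => Q v p.1 p.2 := by
    intro v
    have hfm : ∀ u : ℝ, Measurable fun p : ℝ × ℝ => f p.1 p.2 u := fun u =>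
      hf_meas.comp (measurable_fst.prodMk (measurable_snd.prodMk measurable_const))
    have hKm : ∀ u u' : ℝ, Measurable fun p : ℝ × ℝ => K p.2 u u' := fun u u' =>
      (hKmeas u u').comp measurable_snd
    simp only [hQ]
    exact (((hKm v 1).mul (hfm 1)).add ((hKm v (-1)).mul (hfm (-1)))).sub
      (((hKm 1 v).add (hKm (-1) v)).mul (hfm v))
  have hQbd : ∀ (v s w : ℝ), |Q v s w| ≤ 4 * (CK * M) := by
    intro v s w
    have key : ∀ u u' : ℝ, |K w u u' * f s w u'| ≤ CK * M := by
      intro u u'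
      rw [abs_mul, abs_of_nonneg (hK_nonneg _ _ _)]
      exact mul_le_mul (hK_bdd _ _ _) (hM _ _ _) (abs_nonneg _) hCK.le
    obtain ⟨h1a, h1b⟩ := abs_le.1 (key v 1)
    obtain ⟨h2a, h2b⟩ := abs_le.1 (key v (-1))
    obtain ⟨h3a, h3b⟩ := abs_le.1 (key 1 v)
    obtain ⟨h4a, h4b⟩ := abs_le.1 (key (-1) v)
    have e : Q v s w = K w v 1 * f s w 1 + K w v (-1) * f s w (-1)
        - (K w 1 v * f s w v + K w (-1) v * f s w v) := by
      simp only [hQ]; ring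
    rw [e, abs_le]; constructor <;> linarith
  have hQdiff : ∀ v ∈ ({1, -1} : Set ℝ), ∀ (s w w' B : ℝ), 0 ≤ B →
      (∀ u u' : ℝ, K w u u' = K w' u u') →
      (∀ u ∈ ({1, -1} : Set ℝ), |f s w u - f s w' u| ≤ B) →
      |Q v s w - Q v s w'| ≤ c * B := by
    intro v hv s w w' B hB0 hKe hfB
    have e : Q v s w - Q v s w' = K w v 1 * (f s w 1 - f s w' 1)
        + K w v (-1) * (f s w (-1) - f s w' (-1))
        - (K w 1 v * (f s w v - f s w' v) + K w (-1) v * (f s w v - f s w' v)) := by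
      simp only [hQ, ← hKe]; ring
    have key : ∀ (u : ℝ), ∀ u' ∈ ({1, -1} : Set ℝ),
        |K w u u' * (f s w u' - f s w' u')| ≤ CK * B := by
      intro u u' hu'
      rw [abs_mul, abs_of_nonneg (hK_nonneg _ _ _)]
      exact mul_le_mul (hK_bdd _ _ _) (hfB u' hu') (abs_nonneg _) hCK.le
    obtain ⟨h1a, h1b⟩ := abs_le.1 (key v 1 (by simp))
    obtain ⟨h2a, h2b⟩ := abs_le.1 (key v (-1) (by simp))
    obtain ⟨h3a, h3b⟩ := abs_le.1 (key 1 v hv)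
    obtain ⟨h4a, h4b⟩ := abs_le.1 (key (-1) v hv)
    rw [e, abs_le, hc]; constructor <;> linarith
  have hQint : ∀ (v t x : ℝ), IntervalIntegrable (fun s => Q v s (x - v * (t - s))) volume 0 t := by
    intro v t x
    have hXm : Measurable fun s : ℝ => x - v * (t - s) :=
      measurable_const.sub ((measurable_const.sub measurable_id).const_mul v)
    exact bdd_intervalIntegrable ((hQm v).comp (measurable_id.prodMk hXm)) (4 * (CK * M))
      (fun s => hQbd v s _) 0 t
  have hfQ : ∀ t ∈ Set.Icc (0:ℝ) T, ∀ (x : ℝ), ∀ v ∈ ({1, -1} : Set ℝ),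
      f t x v = φ (x - v * t) v + ∫ s in (0:ℝ)..t, Q v s (x - v * (t - s)) := by
    intro t ht x v hv
    have h0 := hf_eq t ht x v hv
    simp only [hQ]
    simpa using h0
  intro ε hε
  obtain ⟨n, hn⟩ : ∃ n : ℕ, (c*T)^n / (Nat.factorial n) * (2*M) ≤ ε/2 := by
    have h1 := FloorSemiring.tendsto_pow_div_factorial_atTop (K := ℝ) (c*T)
    have hb : (0:ℝ) < (ε/2)/(2*M+1) := div_pos (by linarith) (by linarith)
    obtain ⟨n, hn⟩ := (h1.eventually (eventually_lt_nhds hb)).exists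
    refine ⟨n, ?_⟩
    have h3 : (c*T)^n / (Nat.factorial n) * (2*M) ≤ ((ε/2)/(2*M+1)) * (2*M+1) := by
      apply mul_le_mul hn.le (by linarith) (by linarith) hb.le
    rwa [div_mul_cancel₀ _ (by linarith : (2*M+1) ≠ (0:ℝ))] at h3
  obtain ⟨S, hSdef⟩ : ∃ _z : ℝ, _z = ∑ k ∈ Finset.range n, (c*T)^k / (Nat.factorial k) := ⟨_, rfl⟩
  have hS0 : 0 ≤ S := by
    rw [hSdef]
    exact Finset.sum_nonneg fun k _ =>
    div_nonneg (pow_nonneg (mul_nonneg hc0.le hT.le) _) (Nat.cast_nonneg _)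
  have hden1 : (0:ℝ) < 4*(S+1) := by linarith
  obtain ⟨δ₁, hδ₁, hδ₁'⟩ := hφ_uc (ε/(4*(S+1))) (div_pos hε hden1)
  obtain ⟨q, hqdef⟩ : ∃ _z : ℝ, _z = 16 * CK * M * ((R-1 : ℕ) : ℝ) := ⟨_, rfl⟩
  have hq0 : 0 ≤ q := by
    rw [hqdef]
    exact mul_nonneg (mul_nonneg (by linarith) hM0) (Nat.cast_nonneg _)
  have hden2 : (0:ℝ) < 4*(S+1)*(q+1) := by nlinarith
  have hS1ne : (S:ℝ)+1 ≠ 0 := by linarith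
  have hq1ne : (q:ℝ)+1 ≠ 0 := by linarith
  have hCKM : (0:ℝ) ≤ 8*(CK*M) := by nlinarith
  obtain ⟨δ, hδdef⟩ : ∃ _z : ℝ, _z = min δ₁ (ε/(4*(S+1)*(q+1))) := ⟨_, rfl⟩
  have hδ0 : 0 < δ := by rw [hδdef]; exact lt_min hδ₁ (div_pos hε hden2)
  have hδle1 : δ ≤ δ₁ := by rw [hδdef]; exact min_le_left _ _
  have hδle2 : δ ≤ ε/(4*(S+1)*(q+1)) := by rw [hδdef]; exact min_le_right _ _
  obtain ⟨A, hAdef⟩ : ∃ _z : ℝ, _z = ε/(2*(S+1)) := ⟨_, rfl⟩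
  have hA0 : 0 ≤ A := by rw [hAdef]; exact div_nonneg hε.le (by linarith)
  have hqδ : q * δ ≤ ε/(4*(S+1)) := by
    have h1 : q * δ ≤ q * (ε/(4*(S+1)*(q+1))) := mul_le_mul_of_nonneg_left hδle2 hq0
    have h2 : q * (ε/(4*(S+1)*(q+1))) = (q*ε)/(4*(S+1)*(q+1)) :=
      (mul_div_assoc q ε _).symm
    have h3 : (q*ε)/(4*(S+1)*(q+1)) ≤ ε/(4*(S+1)) := by
      rw [div_le_div_iff₀ hden2 hden1]
      nlinarith [mul_pos hε hden1, hq0]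
    calc q * δ ≤ q * (ε/(4*(S+1)*(q+1))) := h1
      _ = (q*ε)/(4*(S+1)*(q+1)) := h2
      _ ≤ ε/(4*(S+1)) := h3
  refine ⟨δ, hδ0, ?_⟩
  have key : ∀ m : ℕ, ∀ t ∈ Set.Icc (0:ℝ) T, ∀ v ∈ ({1, -1} : Set ℝ), ∀ x y : ℝ,
      |x - y| < δ →
      |f t x v - f t y v| ≤ A * (∑ k ∈ Finset.range m, (c*t)^k / (Nat.factorial k))
        + (c*t)^m / (Nat.factorial m) * (2*M) := by
    intro m
    induction m with
    | zero =>
      intro t ht v hv x y hxy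
      obtain ⟨h1a, h1b⟩ := abs_le.1 (hM t x v)
      obtain ⟨h2a, h2b⟩ := abs_le.1 (hM t y v)
      simp only [Finset.range_zero, Finset.sum_empty, mul_zero, pow_zero, Nat.factorial_zero,
        Nat.cast_one, zero_add, div_one, one_mul]
      rw [abs_le]; constructor <;> linarith
    | succ m ih =>
      intro t ht v hv x y hxy
      have ht0 : (0:ℝ) ≤ t := ht.1
      have hv1 : v = 1 ∨ v = -1 := by
        simpa [Set.mem_insert_iff, Set.mem_singleton_iff] using hv
      have hv2 : v * v = 1 := by rcases hv1 with h | h <;> rw [h] <;> norm_num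
      have hvabs : |v| = 1 := by rcases hv1 with h | h <;> rw [h] <;> norm_num
      obtain ⟨d, hddef⟩ : ∃ _z : ℝ, _z = |x - y| := ⟨_, rfl⟩
      have hd0 : 0 ≤ d := by rw [hddef]; exact abs_nonneg _
      obtain ⟨Bad, hBad⟩ : ∃ _z : Set ℝ, _z = ⋃ r ∈ Finset.Icc 1 (R-1),
          Set.Icc (t + v*(a r - x) - d) (t + v*(a r - x) + d) := ⟨_, rfl⟩
      have hBadm : MeasurableSet Bad := by
        rw [hBad]
        exact (Finset.Icc 1 (R-1)).measurableSet_biUnion fun r _ => measurableSet_Icc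
      obtain ⟨G, hGdef⟩ : ∃ _z : ℝ → ℝ, _z = fun s => Set.indicator Bad (fun _ => 8*(CK*M)) s
          + c * (A * (∑ k ∈ Finset.range m, (c*s)^k / (Nat.factorial k))
            + (c*s)^m / (Nat.factorial m) * (2*M)) := ⟨_, rfl⟩
      have hpt : ∀ s ∈ Set.Icc (0:ℝ) t,
          |Q v s (x - v*(t-s)) - Q v s (y - v*(t-s))| ≤ G s := by
        intro s hs
        have hcs : 0 ≤ c * s := mul_nonneg hc0.le hs.1
        have hBs0 : 0 ≤ A * (∑ k ∈ Finset.range m, (c*s)^k / (Nat.factorial k))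
            + (c*s)^m / (Nat.factorial m) * (2*M) := by
          apply add_nonneg
          · exact mul_nonneg hA0 (Finset.sum_nonneg fun k _ =>
              div_nonneg (pow_nonneg hcs _) (Nat.cast_nonneg _))
          · exact mul_nonneg (div_nonneg (pow_nonneg hcs _) (Nat.cast_nonneg _)) (by linarith)
        by_cases hsB : s ∈ Bad
        · have hind : Set.indicator Bad (fun _ => 8*(CK*M)) s = 8*(CK*M) :=
            Set.indicator_of_mem hsB _
          obtain ⟨h1a, h1b⟩ := abs_le.1 (hQbd v s (x - v*(t-s)))
          obtain ⟨h2a, h2b⟩ := abs_le.1 (hQbd v s (y - v*(t-s)))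
          have hcB : 0 ≤ c * (A * (∑ k ∈ Finset.range m, (c*s)^k / (Nat.factorial k))
              + (c*s)^m / (Nat.factorial m) * (2*M)) := mul_nonneg hc0.le hBs0
          simp only [hGdef, hind]
          rw [abs_le]; constructor <;> linarith
        · have hind : Set.indicator Bad (fun _ => 8*(CK*M)) s = 0 :=
            Set.indicator_of_notMem hsB _
          have hXY : (x - v*(t-s)) - (y - v*(t-s)) = x - y := by ring
          have hKeq : ∀ u u' : ℝ, K (x - v*(t-s)) u u' = K (y - v*(t-s)) u u' := by
            intro u u'
            apply hK_step
            intro r hr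
            by_contra hiff
            apply hsB
            rw [hBad]
            refine Set.mem_iUnion₂.2 ⟨r, hr, ?_⟩
            have hsm : s - (t + v*(a r - x)) = v * ((x - v*(t-s)) - a r) := by
              linear_combination (t - s) * hv2
            have habs2 : |(x - v*(t-s)) - a r| ≤ d := by
              have hle : x - y ≤ d := by rw [hddef]; exact le_abs_self (x - y)
              have hge : -d ≤ x - y := by rw [hddef]; exact neg_abs_le (x - y)
              by_cases h1 : a r ≤ x - v*(t-s)
              · have h2 : ¬ a r ≤ y - v*(t-s) := fun h => hiff ⟨fun _ => h, fun _ => h1⟩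
                push_neg at h2
                rw [abs_le]; constructor <;> linarith
              · have h2 : a r ≤ y - v*(t-s) := by
                  by_contra h2
                  exact hiff (iff_of_false h1 h2)
                push_neg at h1
                rw [abs_le]; constructor <;> linarith
            have habs3 : |s - (t + v*(a r - x))| ≤ d := by
              rw [hsm, abs_mul, hvabs, one_mul]; exact habs2
            obtain ⟨ha1, ha2⟩ := abs_le.1 habs3
            rw [Set.mem_Icc]; constructor <;> linarith
          have hfB : ∀ u ∈ ({1, -1} : Set ℝ),
              |f s (x - v*(t-s)) u - f s (y - v*(t-s)) u|
                ≤ A * (∑ k ∈ Finset.range m, (c*s)^k / (Nat.factorial k))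
                  + (c*s)^m / (Nat.factorial m) * (2*M) := by
            intro u hu
            exact ih s ⟨hs.1, hs.2.trans ht.2⟩ u hu _ _ (by rw [hXY]; exact hxy)
          have hgood := hQdiff v hv s _ _ _ hBs0 hKeq hfB
          simp only [hGdef, hind, zero_add]
          exact hgood
      have hIind : IntervalIntegrable (fun s => Set.indicator Bad (fun _ => 8*(CK*M)) s)
          volume 0 t := by
        apply bdd_intervalIntegrable (measurable_const.indicator hBadm) (8*(CK*M))
        intro s
        by_cases hsB : s ∈ Bad
        · rw [Set.indicator_of_mem hsB, abs_of_nonneg hCKM]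
        · rw [Set.indicator_of_notMem hsB, abs_zero]; exact hCKM
      have hIpoly : IntervalIntegrable (fun s => c * (A * (∑ k ∈ Finset.range m,
          (c*s)^k / (Nat.factorial k)) + (c*s)^m / (Nat.factorial m) * (2*M))) volume 0 t := by
        apply Continuous.intervalIntegrable
        apply continuous_const.mul
        apply Continuous.add
        · exact continuous_const.mul (continuous_finset_sum _ fun k _ => by fun_prop)
        · fun_prop
      have hIG : IntervalIntegrable G volume 0 t := by
        rw [hGdef]; exact hIind.add hIpoly
      have hfx := hfQ t ht x v hv
      have hfy := hfQ t ht y v hv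
      have hsub : f t x v - f t y v = (φ (x - v*t) v - φ (y - v*t) v)
          + ∫ s in (0:ℝ)..t, (Q v s (x - v*(t-s)) - Q v s (y - v*(t-s))) := by
        rw [hfx, hfy, intervalIntegral.integral_sub (hQint v t x) (hQint v t y)]; ring
      have habs1 : |f t x v - f t y v| ≤ |φ (x - v*t) v - φ (y - v*t) v|
          + |∫ s in (0:ℝ)..t, (Q v s (x - v*(t-s)) - Q v s (y - v*(t-s)))| := by
        rw [hsub]; exact abs_add_le _ _
      have hφpart : |φ (x - v*t) v - φ (y - v*t) v| ≤ ε/(4*(S+1)) := by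
        refine (hδ₁' _ _ ?_ v hv).le
        rw [show x - v*t - (y - v*t) = x - y from by ring]
        exact lt_of_lt_of_le hxy hδle1
      have hint1 : |∫ s in (0:ℝ)..t, (Q v s (x - v*(t-s)) - Q v s (y - v*(t-s)))|
          ≤ ∫ s in (0:ℝ)..t, |Q v s (x - v*(t-s)) - Q v s (y - v*(t-s))| := by
        simpa [Real.norm_eq_abs] using intervalIntegral.norm_integral_le_integral_norm
          (f := fun s => Q v s (x - v*(t-s)) - Q v s (y - v*(t-s))) (μ := volume) ht0
      have hint2 : (∫ s in (0:ℝ)..t, |Q v s (x - v*(t-s)) - Q v s (y - v*(t-s))|)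
          ≤ ∫ s in (0:ℝ)..t, G s :=
        intervalIntegral.integral_mono_on ht0 ((hQint v t x).sub (hQint v t y)).abs hIG hpt
      have hGsplit : (∫ s in (0:ℝ)..t, G s)
          = (∫ s in (0:ℝ)..t, Set.indicator Bad (fun _ => 8*(CK*M)) s)
            + ∫ s in (0:ℝ)..t, c * (A * (∑ k ∈ Finset.range m, (c*s)^k / (Nat.factorial k))
              + (c*s)^m / (Nat.factorial m) * (2*M)) := by
        rw [hGdef]; exact intervalIntegral.integral_add hIind hIpoly
      have hIone : ∀ r : ℕ, IntervalIntegrable (fun s => Set.indicator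
          (Set.Icc (t + v*(a r - x) - d) (t + v*(a r - x) + d)) (fun _ => 8*(CK*M)) s)
          volume 0 t := by
        intro r
        apply bdd_intervalIntegrable (measurable_const.indicator measurableSet_Icc) (8*(CK*M))
        intro s
        by_cases hsB : s ∈ Set.Icc (t + v*(a r - x) - d) (t + v*(a r - x) + d)
        · rw [Set.indicator_of_mem hsB, abs_of_nonneg hCKM]
        · rw [Set.indicator_of_notMem hsB, abs_zero]; exact hCKM
      have hbadpart : (∫ s in (0:ℝ)..t, Set.indicator Bad (fun _ => 8*(CK*M)) s) ≤ q * δ := by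
        have hind_le : ∀ s ∈ Set.Icc (0:ℝ) t, Set.indicator Bad (fun _ => 8*(CK*M)) s
            ≤ ∑ r ∈ Finset.Icc 1 (R-1), Set.indicator
              (Set.Icc (t + v*(a r - x) - d) (t + v*(a r - x) + d)) (fun _ => 8*(CK*M)) s := by
          intro s _
          by_cases hsB : s ∈ Bad
          · obtain ⟨r, hr, hmem⟩ := Set.mem_iUnion₂.1 (hBad ▸ hsB)
            rw [Set.indicator_of_mem hsB]
            calc (8*(CK*M)) = Set.indicator
                  (Set.Icc (t + v*(a r - x) - d) (t + v*(a r - x) + d)) (fun _ => 8*(CK*M)) s :=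
                  (Set.indicator_of_mem hmem (fun _ => 8*(CK*M))).symm
              _ ≤ _ := Finset.single_le_sum (f := fun r => Set.indicator
                  (Set.Icc (t + v*(a r - x) - d) (t + v*(a r - x) + d)) (fun _ => 8*(CK*M)) s)
                  (fun i _ => Set.indicator_nonneg (fun _ _ => hCKM) s) hr
          · rw [Set.indicator_of_notMem hsB]
            exact Finset.sum_nonneg fun i _ => Set.indicator_nonneg (fun _ _ => hCKM) s
        have hIsum : IntervalIntegrable (fun s => ∑ r ∈ Finset.Icc 1 (R-1), Set.indicator
            (Set.Icc (t + v*(a r - x) - d) (t + v*(a r - x) + d)) (fun _ => 8*(CK*M)) s)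
            volume 0 t := by
          apply bdd_intervalIntegrable (Finset.measurable_sum _
            (fun r _ => measurable_const.indicator measurableSet_Icc))
            (((R-1 : ℕ) : ℝ) * (8*(CK*M)))
          intro s
          rw [abs_of_nonneg (Finset.sum_nonneg fun i _ => Set.indicator_nonneg (fun _ _ => hCKM) s)]
          calc (∑ r ∈ Finset.Icc 1 (R-1), Set.indicator
              (Set.Icc (t + v*(a r - x) - d) (t + v*(a r - x) + d)) (fun _ => 8*(CK*M)) s)
              ≤ (Finset.Icc 1 (R-1)).card • (8*(CK*M)) := by
                refine Finset.sum_le_card_nsmul _ _ _ fun i _ => ?_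
                by_cases hsB : s ∈ Set.Icc (t + v*(a i - x) - d) (t + v*(a i - x) + d)
                · rw [Set.indicator_of_mem hsB]
                · rw [Set.indicator_of_notMem hsB]; exact hCKM
            _ = ((R-1 : ℕ) : ℝ) * (8*(CK*M)) := by
                rw [Nat.card_Icc, nsmul_eq_mul]
                norm_num
        have h1 := intervalIntegral.integral_mono_on ht0 hIind hIsum hind_le
        have h2 : (∫ s in (0:ℝ)..t, ∑ r ∈ Finset.Icc 1 (R-1), Set.indicator
            (Set.Icc (t + v*(a r - x) - d) (t + v*(a r - x) + d)) (fun _ => 8*(CK*M)) s)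
            = ∑ r ∈ Finset.Icc 1 (R-1), ∫ s in (0:ℝ)..t, Set.indicator
            (Set.Icc (t + v*(a r - x) - d) (t + v*(a r - x) + d)) (fun _ => 8*(CK*M)) s :=
          intervalIntegral.integral_finset_sum fun r _ => hIone r
        have h3 : ∀ r : ℕ, (∫ s in (0:ℝ)..t, Set.indicator
            (Set.Icc (t + v*(a r - x) - d) (t + v*(a r - x) + d)) (fun _ => 8*(CK*M)) s)
            ≤ 8*(CK*M) * (2*d) := by
          intro r
          rw [intervalIntegral.integral_of_le ht0,
            MeasureTheory.integral_indicator measurableSet_Icc, MeasureTheory.setIntegral_const, measureReal_def,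
            Measure.restrict_apply measurableSet_Icc]
          have hfin : volume (Set.Icc (t + v*(a r - x) - d) (t + v*(a r - x) + d)) ≠ ⊤ :=
            measure_Icc_lt_top.ne
          have hμ : volume (Set.Icc (t + v*(a r - x) - d) (t + v*(a r - x) + d) ∩ Set.Ioc 0 t)
              ≤ volume (Set.Icc (t + v*(a r - x) - d) (t + v*(a r - x) + d)) :=
            measure_mono Set.inter_subset_left
          have h4 : (volume (Set.Icc (t + v*(a r - x) - d) (t + v*(a r - x) + d)
              ∩ Set.Ioc 0 t)).toReal ≤ 2*d := by
            refine le_trans (ENNReal.toReal_mono hfin hμ) ?_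
            rw [Real.volume_Icc, ENNReal.toReal_ofReal (by linarith)]
            linarith
          rw [smul_eq_mul]
          calc _ ≤ (2*d) * (8*(CK*M)) := mul_le_mul_of_nonneg_right h4 hCKM
            _ = 8*(CK*M) * (2*d) := by ring
        have h5 : (∑ r ∈ Finset.Icc 1 (R-1), ∫ s in (0:ℝ)..t, Set.indicator
            (Set.Icc (t + v*(a r - x) - d) (t + v*(a r - x) + d)) (fun _ => 8*(CK*M)) s)
            ≤ ((R-1 : ℕ) : ℝ) * (8*(CK*M) * (2*d)) := by
          calc _ ≤ (Finset.Icc 1 (R-1)).card • (8*(CK*M) * (2*d)) :=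
              Finset.sum_le_card_nsmul _ _ _ fun r _ => h3 r
            _ = ((R-1 : ℕ) : ℝ) * (8*(CK*M) * (2*d)) := by
              rw [Nat.card_Icc, nsmul_eq_mul]
              norm_num
        have h6 : ((R-1 : ℕ) : ℝ) * (8*(CK*M) * (2*d)) = q * d := by rw [hqdef]; ring
        have h7 : q * d ≤ q * δ := mul_le_mul_of_nonneg_left (by rw [hddef]; exact hxy.le) hq0
        linarith
      have hpolypart : (∫ s in (0:ℝ)..t, c * (A * (∑ k ∈ Finset.range m,
            (c*s)^k / (Nat.factorial k)) + (c*s)^m / (Nat.factorial m) * (2*M)))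
          = A * (∑ k ∈ Finset.range m, (c*t)^(k+1) / (Nat.factorial (k+1)))
            + (c*t)^(m+1) / (Nat.factorial (m+1)) * (2*M) := by
        have e1 : ∀ s : ℝ, c * (A * (∑ k ∈ Finset.range m, (c*s)^k / (Nat.factorial k))
            + (c*s)^m / (Nat.factorial m) * (2*M))
            = A * (∑ k ∈ Finset.range m, c * ((c*s)^k / (Nat.factorial k)))
              + (c * ((c*s)^m / (Nat.factorial m))) * (2*M) := by
          intro s; rw [← Finset.mul_sum]; ring
        rw [intervalIntegral.integral_congr (fun s _ => e1 s)]
        have hcont : ∀ k : ℕ, Continuous fun s : ℝ => c * ((c*s)^k / (Nat.factorial k)) :=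
          fun k => by fun_prop
        have hIc1 : IntervalIntegrable (fun s => A * (∑ k ∈ Finset.range m,
            c * ((c*s)^k / (Nat.factorial k)))) volume 0 t :=
          (continuous_const.mul (continuous_finset_sum _ fun k _ => hcont k)).intervalIntegrable 0 t
        have hIc2 : IntervalIntegrable (fun s => (c * ((c*s)^m / (Nat.factorial m))) * (2*M))
            volume 0 t := ((hcont m).mul continuous_const).intervalIntegrable 0 t
        rw [intervalIntegral.integral_add hIc1 hIc2, intervalIntegral.integral_const_mul,
          intervalIntegral.integral_mul_const,
          intervalIntegral.integral_finset_sum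
            (fun k (_ : k ∈ Finset.range m) => (hcont k).intervalIntegrable 0 t)]
        simp only [int_pow_fact]
      have hsum : (∑ k ∈ Finset.range (m+1), (c*t)^k / (Nat.factorial k))
          = (∑ k ∈ Finset.range m, (c*t)^(k+1) / (Nat.factorial (k+1))) + 1 := by
        rw [Finset.sum_range_succ']
        simp
      rw [hsum, mul_add, mul_one]
      have hA2 : ε/(4*(S+1)) + q * δ ≤ A := by
        rw [hAdef]
        have he : ε/(4*(S+1)) + ε/(4*(S+1)) = ε/(2*(S+1)) := by
          rw [← add_div, div_eq_div_iff (ne_of_gt (by linarith : (0:ℝ) < 4*(S+1))) (ne_of_gt (by linarith : (0:ℝ) < 2*(S+1)))]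
          ring
        linarith
      linarith
  intro t ht v hv x y hxy
  have h0 := key n t ht v hv x y hxy
  have hctT : c * t ≤ c * T := mul_le_mul_of_nonneg_left ht.2 hc0.le
  have hct0 : 0 ≤ c * t := mul_nonneg hc0.le ht.1
  have hSsum : (∑ k ∈ Finset.range n, (c*t)^k / (Nat.factorial k)) ≤ S := by
    rw [hSdef]
    apply Finset.sum_le_sum
    intro k _
    have hfpos : (0:ℝ) < (Nat.factorial k : ℝ) := Nat.cast_pos.2 (Nat.factorial_pos k)
    exact (div_le_div_iff_of_pos_right hfpos).2 (pow_le_pow_left₀ hct0 hctT k)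
  have htail : (c*t)^n / (Nat.factorial n) * (2*M) ≤ ε/2 := by
    refine le_trans ?_ hn
    have hfpos : (0:ℝ) < (Nat.factorial n : ℝ) := Nat.cast_pos.2 (Nat.factorial_pos n)
    have h4 : (c*t)^n / (Nat.factorial n) ≤ (c*T)^n / (Nat.factorial n) :=
      (div_le_div_iff_of_pos_right hfpos).2 (pow_le_pow_left₀ hct0 hctT n)
    exact mul_le_mul_of_nonneg_right h4 (by linarith)
  have hAS : A * (∑ k ∈ Finset.range n, (c*t)^k / (Nat.factorial k)) ≤ ε/2 := by
    have h1 : A * (∑ k ∈ Finset.range n, (c*t)^k / (Nat.factorial k)) ≤ A * (S+1) := by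
      apply mul_le_mul_of_nonneg_left _ hA0
      linarith
    have h2 : A * (S+1) = ε/2 := by
      rw [hAdef, div_mul_eq_mul_div, div_eq_div_iff (ne_of_gt (by linarith : (0:ℝ) < 2*(S+1))) (by norm_num : (2:ℝ) ≠ 0)]
      ring
    linarith
  linarith
end
end

section
/- Let K be measurable with 0 ≤ K ≤ C_K, let f be a bounded measurable mild solution of the homogeneous kinetic equation with initial datum φ, 0 ≤ φ ≤ C_φ, and let g be a mild solution of the adjoint kinetic equation −∂_t g − v ∂_x g = L̃(g) − σ g with final datum g(T,x,v) = μ(x), where μ ∈ L¹(ℝ) and ‖μ‖_{L¹} ≤ C_μ. Then for every measurable set I ⊆ ℝ and all v, v' ∈ V (the entries of the adjoint representation of the measurement gradient satisfy): |∫₀^T ∫_I f(t,x,v') (g(t,x,v') − g(t,x,v)) dx dt| ≤ 2 C_φ C_μ T e^{4 C_K T}. -/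
open MeasureTheory Real Set Filter

noncomputable section

namespace KineticAux

open Topology
open scoped ENNReal NNReal

/-- Partial-sum comparison function for the Grönwall iteration. -/
def gser (L A B : ℝ) (n : ℕ) (t : ℝ) : ℝ :=
  A * ∑ k ∈ Finset.range n, (L * t) ^ k / (Nat.factorial k : ℝ) +
    B * ((L * t) ^ n / (Nat.factorial n : ℝ))

lemma gser_zero (L A B t : ℝ) : gser L A B 0 t = B := by simp [gser]

lemma gser_nonneg {L A B : ℝ} (hL : 0 ≤ L) (hA : 0 ≤ A) (hB : 0 ≤ B) (n : ℕ) {t : ℝ}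
    (ht : 0 ≤ t) : 0 ≤ gser L A B n t := by
  have h : 0 ≤ L * t := mul_nonneg hL ht
  unfold gser
  have h1 : 0 ≤ ∑ k ∈ Finset.range n, (L * t) ^ k / (Nat.factorial k : ℝ) :=
    Finset.sum_nonneg fun k _ => div_nonneg (pow_nonneg h k) (Nat.cast_nonneg _)
  have h2 : 0 ≤ (L * t) ^ n / (Nat.factorial n : ℝ) :=
    div_nonneg (pow_nonneg h n) (Nat.cast_nonneg _)
  positivity

lemma gser_cont (L A B : ℝ) (n : ℕ) : Continuous (fun s => gser L A B n s) := by
  unfold gser; fun_prop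

lemma integral_term (L : ℝ) (k : ℕ) (t : ℝ) :
    ∫ s in (0:ℝ)..t, L * ((L * s) ^ k / (Nat.factorial k : ℝ))
      = (L * t) ^ (k + 1) / (Nat.factorial (k + 1) : ℝ) := by
  have h : ∀ s : ℝ, L * ((L * s) ^ k / (Nat.factorial k : ℝ))
      = (L ^ (k + 1) / (Nat.factorial k : ℝ)) * s ^ k := by
    intro s; rw [mul_pow]; ring
  simp_rw [h]
  rw [intervalIntegral.integral_const_mul, integral_pow, Nat.factorial_succ]
  have hk : (Nat.factorial k : ℝ) ≠ 0 := by positivity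
  have hk1 : ((k : ℝ) + 1) ≠ 0 := by positivity
  push_cast
  rw [zero_pow (Nat.succ_ne_zero k), sub_zero, mul_pow]
  field_simp

lemma integral_gser (L A B : ℝ) (n : ℕ) (t : ℝ) :
    ∫ s in (0:ℝ)..t, L * gser L A B n s = gser L A B (n + 1) t - A := by
  have h1 : ∀ s : ℝ, L * gser L A B n s
      = (∑ k ∈ Finset.range n, A * (L * ((L * s) ^ k / (Nat.factorial k : ℝ))))
        + B * (L * ((L * s) ^ n / (Nat.factorial n : ℝ))) := by
    intro s; unfold gser
    rw [mul_add, Finset.mul_sum, Finset.mul_sum]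
    congr 1
    · exact Finset.sum_congr rfl fun k _ => by ring
    · ring
  have hterm : ∀ (c : ℝ) (k : ℕ),
      IntervalIntegrable (fun s => c * (L * ((L * s) ^ k / (Nat.factorial k : ℝ))))
        volume 0 t := by
    intro c k; apply Continuous.intervalIntegrable; fun_prop
  have hsumint : IntervalIntegrable
      (fun s => ∑ k ∈ Finset.range n, A * (L * ((L * s) ^ k / (Nat.factorial k : ℝ))))
      volume 0 t := by
    apply Continuous.intervalIntegrable; fun_prop
  rw [intervalIntegral.integral_congr (g := fun s =>
      (∑ k ∈ Finset.range n, A * (L * ((L * s) ^ k / (Nat.factorial k : ℝ))))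
        + B * (L * ((L * s) ^ n / (Nat.factorial n : ℝ)))) (fun s _ => h1 s)]
  rw [intervalIntegral.integral_add hsumint (hterm B n)]
  rw [intervalIntegral.integral_finset_sum (fun k _ => hterm A k)]
  have e1 : ∀ k : ℕ, (∫ x in (0:ℝ)..t, A * (L * ((L * x) ^ k / (Nat.factorial k : ℝ))))
      = A * ((L * t) ^ (k + 1) / (Nat.factorial (k + 1) : ℝ)) := by
    intro k; rw [intervalIntegral.integral_const_mul, integral_term]
  have e2 : (∫ x in (0:ℝ)..t, B * (L * ((L * x) ^ n / (Nat.factorial n : ℝ))))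
      = B * ((L * t) ^ (n + 1) / (Nat.factorial (n + 1) : ℝ)) := by
    rw [intervalIntegral.integral_const_mul, integral_term]
  simp_rw [e1, e2]
  unfold gser
  rw [Finset.sum_range_succ']
  simp only [pow_zero, Nat.factorial_zero, Nat.cast_one]
  rw [show (1:ℝ)/1 = 1 from by norm_num, mul_add, Finset.mul_sum]
  ring

lemma gser_le_exp {L A B : ℝ} (hA : 0 ≤ A) {t : ℝ} (h : 0 ≤ L * t) (n : ℕ) :
    gser L A B n t ≤ A * Real.exp (L * t) + B * ((L * t) ^ n / (Nat.factorial n : ℝ)) := by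
  unfold gser
  have := Real.sum_le_exp_of_nonneg h n
  gcongr

lemma le_of_le_gser {L A B y : ℝ} (hA : 0 ≤ A) {t : ℝ} (h : 0 ≤ L * t)
    (hy : ∀ n, y ≤ gser L A B n t) : y ≤ A * Real.exp (L * t) := by
  have hlim : Tendsto (fun n => A * Real.exp (L * t)
      + B * ((L * t) ^ n / (Nat.factorial n : ℝ))) atTop (𝓝 (A * Real.exp (L * t) + B * 0)) := by
    exact tendsto_const_nhds.add ((FloorSemiring.tendsto_pow_div_factorial_atTop (L * t)).const_mul B)
  rw [mul_zero, add_zero] at hlim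
  refine ge_of_tendsto hlim (Eventually.of_forall fun n => ?_)
  exact (hy n).trans (gser_le_exp hA h n)


lemma bwd_gronwall {T L A B : ℝ} (hL : 0 ≤ L) (hA : 0 ≤ A) (hB : 0 ≤ B)
    {u : ℝ → ℝ} (hum : Measurable u) (hu0 : ∀ s, 0 ≤ u s)
    (hub : ∀ s ∈ Icc (0:ℝ) T, u s ≤ B)
    (hrec : ∀ t ∈ Icc (0:ℝ) T, u t ≤ A + ∫ s in Ioc t T, L * u s) :
    ∀ t ∈ Icc (0:ℝ) T, u t ≤ A * Real.exp (L * (T - t)) := by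
  have key : ∀ n : ℕ, ∀ t ∈ Icc (0:ℝ) T, u t ≤ gser L A B n (T - t) := by
    intro n
    induction n with
    | zero => intro t ht; rw [gser_zero]; exact hub t ht
    | succ n ih =>
      intro t ht
      have ht0 : (0:ℝ) ≤ t := ht.1
      have htT : t ≤ T := ht.2
      have hsub : Ioc t T ⊆ Icc (0:ℝ) T := fun s hs => ⟨le_trans ht0 hs.1.le, hs.2⟩
      have hcont : Continuous fun s : ℝ => L * gser L A B n (T - s) := by
        exact (continuous_const.mul ((gser_cont L A B n).comp
          (continuous_const.sub continuous_id)))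
      have hint2 : IntegrableOn (fun s => L * gser L A B n (T - s)) (Ioc t T) volume :=
        hcont.integrableOn_Ioc
      have hint1 : IntegrableOn (fun s => L * u s) (Ioc t T) volume := by
        refine Integrable.mono' (g := fun _ => L * B)
          (integrableOn_const measure_Ioc_lt_top.ne)
          ((hum.const_mul L).aestronglyMeasurable) ?_
        filter_upwards [ae_restrict_mem measurableSet_Ioc] with s hs
        have := hub s (hsub hs)
        have h0 := hu0 s
        rw [Real.norm_eq_abs, abs_of_nonneg (mul_nonneg hL h0)]
        exact mul_le_mul_of_nonneg_left this hL
      calc u t ≤ A + ∫ s in Ioc t T, L * u s := hrec t ht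
        _ ≤ A + ∫ s in Ioc t T, L * gser L A B n (T - s) := by
            refine add_le_add_right (setIntegral_mono_on hint1 hint2 measurableSet_Ioc ?_) A
            exact fun s hs => mul_le_mul_of_nonneg_left (ih s (hsub hs)) hL
        _ = A + ∫ s in t..T, L * gser L A B n (T - s) := by
            rw [intervalIntegral.integral_of_le htT]
        _ = A + ∫ s in (0:ℝ)..(T - t), L * gser L A B n s := by
            rw [intervalIntegral.integral_comp_sub_left (fun s => L * gser L A B n s) T]
            norm_num
        _ = gser L A B (n + 1) (T - t) := by rw [integral_gser]; ring
  intro t ht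
  have h : 0 ≤ L * (T - t) := mul_nonneg hL (sub_nonneg.2 ht.2)
  exact le_of_le_gser (B := B) hA h (fun n => key n t ht)

lemma fwd_bound {T CK Cφ : ℝ} (hCK : 0 ≤ CK) (hCφ : 0 ≤ Cφ)
    {K : ℝ → ℝ → ℝ → ℝ} (hK0 : ∀ x v v', 0 ≤ K x v v') (hKb : ∀ x v v', K x v v' ≤ CK)
    {φ : ℝ → ℝ → ℝ} (hφ : ∀ x v, 0 ≤ φ x v ∧ φ x v ≤ Cφ)
    {f : ℝ → ℝ → ℝ → ℝ} (hf : IsMildF T K φ (fun _ _ _ => 0) f) :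
    ∀ t ∈ Icc (0:ℝ) T, ∀ x : ℝ, ∀ v ∈ ({1, -1} : Set ℝ),
      |f t x v| ≤ Cφ * Real.exp (4 * CK * t) := by
  obtain ⟨-, ⟨C, hC⟩, hmild⟩ := hf
  set B := max C 0 with hBdef
  have hB : 0 ≤ B := le_max_right _ _
  have hfB : ∀ t x v, |f t x v| ≤ B := fun t x v => (hC t x v).trans (le_max_left _ _)
  set L := 4 * CK with hLdef
  have hL : 0 ≤ L := by positivity
  have key : ∀ n : ℕ, ∀ t ∈ Icc (0:ℝ) T, ∀ x : ℝ, ∀ v ∈ ({1, -1} : Set ℝ),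
      |f t x v| ≤ gser L Cφ B n t := by
    intro n
    induction n with
    | zero => intro t ht x v hv; rw [gser_zero]; exact hfB t x v
    | succ n ih =>
      intro t ht x v hv
      have ht0 : (0:ℝ) ≤ t := ht.1
      have htT : t ≤ T := ht.2
      rw [hmild t ht x v hv]
      have hφb : |φ (x - v * t) v| ≤ Cφ := by
        rw [abs_of_nonneg (hφ _ _).1]; exact (hφ _ _).2
      have hmaj : IntervalIntegrable (fun s => L * gser L Cφ B n s) volume 0 t :=
        (continuous_const.mul (gser_cont L Cφ B n)).intervalIntegrable 0 t
      have hbd : ∀ᵐ s ∂volume.restrict (Set.uIoc (0:ℝ) t),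
          ‖K (x - v * (t - s)) v 1 * f s (x - v * (t - s)) 1
            + K (x - v * (t - s)) v (-1) * f s (x - v * (t - s)) (-1)
            - (K (x - v * (t - s)) 1 v + K (x - v * (t - s)) (-1) v)
                * f s (x - v * (t - s)) v
            + (fun _ _ _ => (0:ℝ)) s (x - v * (t - s)) v‖
          ≤ L * gser L Cφ B n s := by
        rw [uIoc_of_le ht0]
        filter_upwards [ae_restrict_mem measurableSet_Ioc] with s hs
        have hs' : s ∈ Icc (0:ℝ) T := ⟨hs.1.le, hs.2.trans htT⟩
        set y := x - v * (t - s)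
        have hg : 0 ≤ gser L Cφ B n s := gser_nonneg hL hCφ hB n hs.1.le
        have h1 : |f s y 1| ≤ gser L Cφ B n s := ih s hs' y 1 (by norm_num)
        have h2 : |f s y (-1)| ≤ gser L Cφ B n s := ih s hs' y (-1) (by norm_num)
        have h3 : |f s y v| ≤ gser L Cφ B n s := ih s hs' y v hv
        have e1 : |K y v 1 * f s y 1| ≤ CK * gser L Cφ B n s := by
          rw [abs_mul, abs_of_nonneg (hK0 y v 1)]
          exact mul_le_mul (hKb y v 1) h1 (abs_nonneg _) hCK
        have e2 : |K y v (-1) * f s y (-1)| ≤ CK * gser L Cφ B n s := by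
          rw [abs_mul, abs_of_nonneg (hK0 y v (-1))]
          exact mul_le_mul (hKb y v (-1)) h2 (abs_nonneg _) hCK
        have e3 : |(K y 1 v + K y (-1) v) * f s y v| ≤ (2 * CK) * gser L Cφ B n s := by
          rw [abs_mul, abs_of_nonneg (add_nonneg (hK0 y 1 v) (hK0 y (-1) v))]
          refine mul_le_mul ?_ h3 (abs_nonneg _) (by positivity)
          linarith [hKb y 1 v, hKb y (-1) v]
        simp only [Real.norm_eq_abs]
        calc |K y v 1 * f s y 1 + K y v (-1) * f s y (-1)
              - (K y 1 v + K y (-1) v) * f s y v + 0|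
            ≤ |K y v 1 * f s y 1 + K y v (-1) * f s y (-1)|
              + |(K y 1 v + K y (-1) v) * f s y v| := by
              rw [add_zero]; exact abs_sub _ _
          _ ≤ |K y v 1 * f s y 1| + |K y v (-1) * f s y (-1)|
              + |(K y 1 v + K y (-1) v) * f s y v| :=
              add_le_add_left (abs_add_le _ _) _
          _ ≤ CK * gser L Cφ B n s + CK * gser L Cφ B n s
              + (2 * CK) * gser L Cφ B n s := by linarith
          _ = L * gser L Cφ B n s := by rw [hLdef]; ring
      have hnorm := intervalIntegral.norm_integral_le_abs_of_norm_le hbd hmaj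
      rw [integral_gser] at hnorm
      have habs : |gser L Cφ B (n + 1) t - Cφ| = gser L Cφ B (n + 1) t - Cφ := by
        rw [abs_of_nonneg]
        have : Cφ = Cφ * 1 := by ring
        unfold gser
        have h1 : (1:ℝ) ≤ ∑ k ∈ Finset.range (n+1), (L*t)^k / (Nat.factorial k : ℝ) := by
          rw [Finset.sum_range_succ']
          simp only [pow_zero, Nat.factorial_zero, Nat.cast_one]
          have : 0 ≤ ∑ k ∈ Finset.range n, (L*t)^(k+1) / (Nat.factorial (k+1) : ℝ) :=
            Finset.sum_nonneg fun k _ =>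
              div_nonneg (pow_nonneg (mul_nonneg hL ht0) _) (Nat.cast_nonneg _)
          linarith
        have h2 : 0 ≤ B * ((L*t)^(n+1) / (Nat.factorial (n+1) : ℝ)) :=
          mul_nonneg hB (div_nonneg (pow_nonneg (mul_nonneg hL ht0) _) (Nat.cast_nonneg _))
        nlinarith
      rw [habs] at hnorm
      calc |φ (x - v * t) v + _| ≤ |φ (x - v * t) v| + _ := abs_add_le _ _
        _ ≤ Cφ + (gser L Cφ B (n+1) t - Cφ) := add_le_add hφb hnorm
        _ = gser L Cφ B (n + 1) t := by ring
  intro t ht x v hv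
  have h : 0 ≤ L * t := mul_nonneg hL ht.1
  rw [show (4:ℝ) * CK * t = L * t from by rw [hLdef]]
  exact le_of_le_gser (B := B) hCφ h (fun n => key n t ht x v hv)

lemma bwd_l1_bound {T CK Cμ : ℝ} (hCK : 0 ≤ CK) (hCμ : 0 ≤ Cμ)
    {K : ℝ → ℝ → ℝ → ℝ} (hK0 : ∀ x v v', 0 ≤ K x v v') (hKb : ∀ x v v', K x v v' ≤ CK)
    {μ : ℝ → ℝ} (hμ_int : Integrable μ) (hμ : (∫ x : ℝ, |μ x|) ≤ Cμ)
    {g : ℝ → ℝ → ℝ → ℝ} (hg : IsMildG T K 1 (fun x _ => μ x) (fun _ _ _ => 0) g) :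
    ∀ t ∈ Icc (0:ℝ) T, ∀ v ∈ ({1, -1} : Set ℝ),
      (∫ x : ℝ, |g t x v|) ≤ Cμ * Real.exp (4 * CK * (T - t)) := by
  obtain ⟨hgm, hgint, ⟨Cg, hCg⟩, hmild⟩ := hg
  have hsec : ∀ (w d e : ℝ), Measurable (fun p : ℝ × ℝ => g p.1 (p.2 + d * (p.1 - e)) w) := by
    intro w d e
    have hm : Measurable (fun p : ℝ × ℝ => ((p.1, p.2 + d * (p.1 - e), w) : ℝ × ℝ × ℝ)) := by
      fun_prop
    exact hgm.comp hm
  have hxsec : ∀ (w d s' : ℝ), Measurable (fun x : ℝ => ENNReal.ofReal |g s' (x + d) w|) := by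
    intro w d s'
    have hm : Measurable (fun x : ℝ => ((s', x + d, w) : ℝ × ℝ × ℝ)) := by fun_prop
    exact (hgm.comp hm).abs.ennreal_ofReal
  set u : ℝ → ℝ := fun s => max (∫ x : ℝ, |g s x 1|) (∫ x : ℝ, |g s x (-1)|) with hu_def
  have hiw : ∀ w : ℝ, Measurable (fun s : ℝ => ∫ x : ℝ, |g s x w|) := by
    intro w
    have hm : Measurable (fun p : ℝ × ℝ => |g p.1 p.2 w|) := by
      have hm2 : Measurable (fun p : ℝ × ℝ => ((p.1, p.2, w) : ℝ × ℝ × ℝ)) := by fun_prop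
      exact (hgm.comp hm2).abs
    exact hm.stronglyMeasurable.integral_prod_right'.measurable
  have hum : Measurable u := (hiw 1).max (hiw (-1))
  have hu0 : ∀ s, 0 ≤ u s := fun s =>
    le_trans (integral_nonneg fun x => abs_nonneg _) (le_max_left _ _)
  have one_mem : (1 : ℝ) ∈ ({1, -1} : Set ℝ) := by norm_num
  have negone_mem : (-1 : ℝ) ∈ ({1, -1} : Set ℝ) := by norm_num
  have hub : ∀ s ∈ Icc (0:ℝ) T, u s ≤ max Cg 0 := by
    intro s hs
    exact max_le ((hCg s hs 1 one_mem).trans (le_max_left _ _))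
      ((hCg s hs (-1) negone_mem).trans (le_max_left _ _))
  -- the key recursive inequality
  have hcomp : ∀ t ∈ Icc (0:ℝ) T, ∀ v ∈ ({1, -1} : Set ℝ),
      (∫ x : ℝ, |g t x v|) ≤ Cμ + ∫ s in Ioc t T, (4 * CK) * u s := by
    intro t ht v hv
    have ht0 : (0:ℝ) ≤ t := ht.1
    have htT : t ≤ T := ht.2
    have hsub : Ioc t T ⊆ Icc (0:ℝ) T := fun s hs => ⟨le_trans ht0 hs.1.le, hs.2⟩
    set G : ℝ → ℝ → ℝ≥0∞ := fun s x =>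
      ENNReal.ofReal CK * (ENNReal.ofReal |g s (x + v * (s - t)) 1|
        + ENNReal.ofReal |g s (x + v * (s - t)) (-1)|)
      + ENNReal.ofReal (2 * CK) * ENNReal.ofReal |g s (x + v * (s - t)) v| with hG_def
    have hGm : Measurable (fun p : ℝ × ℝ => G p.1 p.2) := by
      rw [hG_def]
      beta_reduce
      apply Measurable.fun_add
      · exact (((hsec 1 v t).abs.ennreal_ofReal.add
          ((hsec (-1) v t).abs.ennreal_ofReal)).const_mul _)
      · exact ((hsec v v t).abs.ennreal_ofReal.const_mul _)
    -- the time integral term is bounded by the lintegral of G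
    have key2 : ∀ x : ℝ, (‖∫ s in t..T,
        (1 * (K (x + v * (s - t)) 1 v * g s (x + v * (s - t)) 1
            + K (x + v * (s - t)) (-1) v * g s (x + v * (s - t)) (-1))
          - (K (x + v * (s - t)) 1 v + K (x + v * (s - t)) (-1) v)
              * g s (x + v * (s - t)) v
          + (fun _ _ _ => (0:ℝ)) s (x + v * (s - t)) v)‖₊ : ℝ≥0∞)
        ≤ ∫⁻ s in Ioc t T, G s x := by
      intro x
      rw [intervalIntegral.integral_of_le htT]
      refine le_trans (enorm_integral_le_lintegral_enorm _) (lintegral_mono fun s => ?_)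
      set y := x + v * (s - t) with hy
      have hreal : |1 * (K y 1 v * g s y 1 + K y (-1) v * g s y (-1))
          - (K y 1 v + K y (-1) v) * g s y v
          + (fun _ _ _ => (0:ℝ)) s y v|
          ≤ CK * (|g s y 1| + |g s y (-1)|) + (2 * CK) * |g s y v| := by
        simp only [one_mul, add_zero]
        have e1 : |K y 1 v * g s y 1| ≤ CK * |g s y 1| := by
          rw [abs_mul, abs_of_nonneg (hK0 y 1 v)]
          exact mul_le_mul_of_nonneg_right (hKb y 1 v) (abs_nonneg _)
        have e2 : |K y (-1) v * g s y (-1)| ≤ CK * |g s y (-1)| := by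
          rw [abs_mul, abs_of_nonneg (hK0 y (-1) v)]
          exact mul_le_mul_of_nonneg_right (hKb y (-1) v) (abs_nonneg _)
        have e3 : |(K y 1 v + K y (-1) v) * g s y v| ≤ (2 * CK) * |g s y v| := by
          rw [abs_mul, abs_of_nonneg (add_nonneg (hK0 y 1 v) (hK0 y (-1) v))]
          refine mul_le_mul_of_nonneg_right ?_ (abs_nonneg _)
          linarith [hKb y 1 v, hKb y (-1) v]
        calc |K y 1 v * g s y 1 + K y (-1) v * g s y (-1)
              - (K y 1 v + K y (-1) v) * g s y v|
            ≤ |K y 1 v * g s y 1 + K y (-1) v * g s y (-1)|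
              + |(K y 1 v + K y (-1) v) * g s y v| := abs_sub _ _
          _ ≤ |K y 1 v * g s y 1| + |K y (-1) v * g s y (-1)|
              + |(K y 1 v + K y (-1) v) * g s y v| := add_le_add_left (abs_add_le _ _) _
          _ ≤ CK * (|g s y 1| + |g s y (-1)|) + (2 * CK) * |g s y v| := by linarith
      rw [Real.enorm_eq_ofReal_abs]
      refine le_trans (ENNReal.ofReal_le_ofReal hreal) ?_
      rw [hG_def]
      rw [ENNReal.ofReal_add (by positivity) (by positivity),
        ENNReal.ofReal_mul hCK, ENNReal.ofReal_mul (by positivity : (0:ℝ) ≤ 2 * CK),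
        ENNReal.ofReal_add (abs_nonneg _) (abs_nonneg _)]
    -- pointwise bound
    have step1 : ∀ x : ℝ, (‖g t x v‖₊ : ℝ≥0∞)
        ≤ (‖μ (x + v * (T - t))‖₊ : ℝ≥0∞) + ∫⁻ s in Ioc t T, G s x := by
      intro x
      rw [hmild t ht x v hv]
      exact le_trans (le_trans (ENNReal.coe_le_coe.mpr (nnnorm_add_le _ _)) (ENNReal.coe_add _ _).le) (add_le_add_right (key2 x) _)
    -- integrability of the comparison function on Ioc t T
    have hint_u : IntegrableOn (fun s => (4 * CK) * u s) (Ioc t T) volume := by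
      refine Integrable.mono' (g := fun _ => (4 * CK) * max Cg 0)
        (integrableOn_const measure_Ioc_lt_top.ne)
        ((hum.const_mul _).aestronglyMeasurable) ?_
      filter_upwards [ae_restrict_mem measurableSet_Ioc] with s hs
      rw [Real.norm_eq_abs, abs_of_nonneg (mul_nonneg (by positivity) (hu0 s))]
      exact mul_le_mul_of_nonneg_left (hub s (hsub hs)) (by positivity)
    -- inner spatial integral bound for s ∈ Ioc t T
    have inner : ∀ s ∈ Ioc t T, (∫⁻ x : ℝ, G s x) ≤ ENNReal.ofReal ((4 * CK) * u s) := by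
      intro s hs
      have hs' : s ∈ Icc (0:ℝ) T := hsub hs
      have hshift : ∀ w ∈ ({1, -1} : Set ℝ),
          (∫⁻ x : ℝ, ENNReal.ofReal |g s (x + v * (s - t)) w|)
            = ENNReal.ofReal (∫ x : ℝ, |g s x w|) := by
        intro w hw
        rw [lintegral_add_right_eq_self (fun x => ENNReal.ofReal |g s x w|) (v * (s - t))]
        exact (ofReal_integral_eq_lintegral_ofReal (hgint s hs' w hw).abs
          (Eventually.of_forall fun x => abs_nonneg _)).symm
      have husv : (∫ x : ℝ, |g s x v|) ≤ u s := by
        rcases Set.mem_insert_iff.mp hv with hv1 | hv1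
        · rw [hv1]; exact le_max_left _ _
        · rw [Set.mem_singleton_iff.mp hv1]; exact le_max_right _ _
      calc (∫⁻ x : ℝ, G s x)
          = ENNReal.ofReal CK * ((∫⁻ x : ℝ, ENNReal.ofReal |g s (x + v * (s - t)) 1|)
              + ∫⁻ x : ℝ, ENNReal.ofReal |g s (x + v * (s - t)) (-1)|)
            + ENNReal.ofReal (2 * CK) * ∫⁻ x : ℝ, ENNReal.ofReal |g s (x + v * (s - t)) v| := by
            rw [hG_def]
            beta_reduce
            rw [lintegral_add_left (((hxsec 1 (v * (s - t)) s).fun_add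
              (hxsec (-1) (v * (s - t)) s)).const_mul _)]
            rw [lintegral_const_mul' _ _ ENNReal.ofReal_ne_top,
              lintegral_const_mul' _ _ ENNReal.ofReal_ne_top,
              lintegral_add_left (hxsec 1 (v * (s - t)) s)]
        _ = ENNReal.ofReal CK * (ENNReal.ofReal (∫ x : ℝ, |g s x 1|)
              + ENNReal.ofReal (∫ x : ℝ, |g s x (-1)|))
            + ENNReal.ofReal (2 * CK) * ENNReal.ofReal (∫ x : ℝ, |g s x v|) := by
            rw [hshift 1 one_mem, hshift (-1) negone_mem, hshift v hv]
        _ ≤ ENNReal.ofReal CK * (ENNReal.ofReal (u s) + ENNReal.ofReal (u s))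
            + ENNReal.ofReal (2 * CK) * ENNReal.ofReal (u s) := by
            gcongr
            · exact le_max_left _ _
            · exact le_max_right _ _
        _ = ENNReal.ofReal ((4 * CK) * u s) := by
            rw [← ENNReal.ofReal_add (hu0 s) (hu0 s), ← ENNReal.ofReal_mul hCK,
              ← ENNReal.ofReal_mul (by positivity : (0:ℝ) ≤ 2 * CK),
              ← ENNReal.ofReal_add (mul_nonneg hCK (by linarith [hu0 s]))
                (mul_nonneg (by positivity) (hu0 s))]
            congr 1; ring
    -- assemble
    have hRnn : 0 ≤ ∫ s in Ioc t T, (4 * CK) * u s :=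
      setIntegral_nonneg measurableSet_Ioc fun s _ => mul_nonneg (by positivity) (hu0 s)
    have main : ENNReal.ofReal (∫ x : ℝ, |g t x v|)
        ≤ ENNReal.ofReal (Cμ + ∫ s in Ioc t T, (4 * CK) * u s) := by
      have lhs_eq : ENNReal.ofReal (∫ x : ℝ, |g t x v|) = ∫⁻ x : ℝ, (‖g t x v‖₊ : ℝ≥0∞) := by
        simpa [Real.norm_eq_abs, enorm_eq_nnnorm] using ofReal_integral_norm_eq_lintegral_enorm (hgint t ht v hv)
      rw [lhs_eq, ENNReal.ofReal_add hCμ hRnn]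
      calc (∫⁻ x : ℝ, (‖g t x v‖₊ : ℝ≥0∞))
          ≤ ∫⁻ x : ℝ, ((‖μ (x + v * (T - t))‖₊ : ℝ≥0∞) + ∫⁻ s in Ioc t T, G s x) :=
            lintegral_mono step1
        _ = (∫⁻ x : ℝ, (‖μ (x + v * (T - t))‖₊ : ℝ≥0∞))
            + ∫⁻ x : ℝ, ∫⁻ s in Ioc t T, G s x :=
            lintegral_add_right _ ((hGm.comp measurable_swap).lintegral_prod_right')
        _ = (∫⁻ x : ℝ, (‖μ x‖₊ : ℝ≥0∞)) + ∫⁻ s in Ioc t T, ∫⁻ x : ℝ, G s x := by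
            rw [lintegral_add_right_eq_self (fun x => ((‖μ x‖₊ : ℝ≥0∞))) (v * (T - t)),
              lintegral_lintegral_swap (f := fun (x s : ℝ) => G s x)
                (by exact (hGm.comp measurable_swap).aemeasurable)]
        _ ≤ ENNReal.ofReal Cμ + ENNReal.ofReal (∫ s in Ioc t T, (4 * CK) * u s) := by
            refine add_le_add ?_ ?_
            · simp only [← enorm_eq_nnnorm]
              rw [← ofReal_integral_norm_eq_lintegral_enorm hμ_int]
              refine ENNReal.ofReal_le_ofReal ?_
              simpa [Real.norm_eq_abs] using hμ
            · calc (∫⁻ s in Ioc t T, ∫⁻ x : ℝ, G s x)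
                  ≤ ∫⁻ s in Ioc t T, ENNReal.ofReal ((4 * CK) * u s) := by
                    refine lintegral_mono_ae ?_
                    filter_upwards [ae_restrict_mem measurableSet_Ioc] with s hs
                    exact inner s hs
                _ = ENNReal.ofReal (∫ s in Ioc t T, (4 * CK) * u s) :=
                    (ofReal_integral_eq_lintegral_ofReal hint_u
                      (Eventually.of_forall fun s => mul_nonneg (by positivity) (hu0 s))).symm
    exact (ENNReal.ofReal_le_ofReal_iff (by linarith)).mp main
  -- Grönwall
  have hgron : ∀ t ∈ Icc (0:ℝ) T, u t ≤ Cμ * Real.exp ((4 * CK) * (T - t)) := by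
    refine bwd_gronwall (by positivity) hCμ (le_max_right Cg 0) hum hu0 hub ?_
    intro t ht
    exact max_le (hcomp t ht 1 one_mem) (hcomp t ht (-1) negone_mem)
  intro t ht v hv
  have hle : (∫ x : ℝ, |g t x v|) ≤ u t := by
    rcases Set.mem_insert_iff.mp hv with hv1 | hv1
    · rw [hv1]; exact le_max_left _ _
    · rw [Set.mem_singleton_iff.mp hv1]; exact le_max_right _ _
  exact hle.trans (hgron t ht)

end KineticAux


/-- uniform bound on the adjoint representation of the measurement-gradient
entries: `|∫₀ᵀ ∫_I f(t,x,v')(g(t,x,v') − g(t,x,v)) dx dt| ≤ 2 C_φ C_μ T e^{4 C_K T}`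
for the forward solution `f` and the adjoint solution `g` with final datum `μ`. -/
theorem gradient_entry_bound
    (T CK Cφ Cμ : ℝ) (hT : 0 < T) (hCK : 0 < CK) (hCφ : 0 ≤ Cφ) (hCμ : 0 ≤ Cμ)
    (K : ℝ → ℝ → ℝ → ℝ)
    (hK_nonneg : ∀ x v v', 0 ≤ K x v v') (hK_bdd : ∀ x v v', K x v v' ≤ CK)
    (φ : ℝ → ℝ → ℝ) (hφ_bds : ∀ x v, 0 ≤ φ x v ∧ φ x v ≤ Cφ)
    (μ : ℝ → ℝ) (hμ_int : Integrable μ) (hμ : (∫ x : ℝ, |μ x|) ≤ Cμ)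
    (f g : ℝ → ℝ → ℝ → ℝ)
    (hf : IsMildF T K φ (fun _ _ _ => 0) f)
    (hg : IsMildG T K 1 (fun x _ => μ x) (fun _ _ _ => 0) g) :
    ∀ I : Set ℝ, MeasurableSet I →
      ∀ v ∈ ({1, -1} : Set ℝ), ∀ v' ∈ ({1, -1} : Set ℝ),
        |∫ t in (0 : ℝ)..T, ∫ x in I, f t x v' * (g t x v' - g t x v)|
          ≤ 2 * Cφ * Cμ * T * Real.exp (4 * CK * T) := by
  intro I hI v hv v' hv'
  have hfb := KineticAux.fwd_bound hCK.le hCφ hK_nonneg hK_bdd hφ_bds hf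
  have hgb := KineticAux.bwd_l1_bound hCK.le hCμ hK_nonneg hK_bdd hμ_int hμ hg
  have hgint := hg.2.1
  set C := 2 * Cφ * Cμ * Real.exp (4 * CK * T) with hC
  have hbd : ∀ t ∈ Set.uIoc (0:ℝ) T, ‖∫ x in I, f t x v' * (g t x v' - g t x v)‖ ≤ C := by
    intro t htI
    rw [uIoc_of_le hT.le] at htI
    have ht : t ∈ Icc (0:ℝ) T := ⟨htI.1.le, htI.2⟩
    have hg1 : Integrable (fun x => g t x v') := hgint t ht v' hv'
    have hg2 : Integrable (fun x => g t x v) := hgint t ht v hv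
    have hmaj : Integrable
        (fun x => (Cφ * Real.exp (4 * CK * t)) * (|g t x v'| + |g t x v|)) :=
      (hg1.abs.add hg2.abs).const_mul _
    have hptw : ∀ᵐ x ∂(volume.restrict I), ‖f t x v' * (g t x v' - g t x v)‖
        ≤ (Cφ * Real.exp (4 * CK * t)) * (|g t x v'| + |g t x v|) := by
      refine Eventually.of_forall fun x => ?_
      rw [Real.norm_eq_abs, abs_mul]
      exact mul_le_mul (hfb t ht x v' hv') (abs_sub _ _) (abs_nonneg _) (by positivity)
    calc ‖∫ x in I, f t x v' * (g t x v' - g t x v)‖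
        ≤ ∫ x in I, (Cφ * Real.exp (4 * CK * t)) * (|g t x v'| + |g t x v|) :=
          norm_integral_le_of_norm_le hmaj.integrableOn hptw
      _ ≤ ∫ x : ℝ, (Cφ * Real.exp (4 * CK * t)) * (|g t x v'| + |g t x v|) :=
          setIntegral_le_integral hmaj (Eventually.of_forall fun x => by positivity)
      _ = (Cφ * Real.exp (4 * CK * t)) * ((∫ x : ℝ, |g t x v'|) + ∫ x : ℝ, |g t x v|) := by
          rw [MeasureTheory.integral_const_mul, integral_add hg1.abs hg2.abs]
      _ ≤ (Cφ * Real.exp (4 * CK * t))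
            * (Cμ * Real.exp (4 * CK * (T - t)) + Cμ * Real.exp (4 * CK * (T - t))) :=
          mul_le_mul_of_nonneg_left (add_le_add (hgb t ht v' hv') (hgb t ht v hv))
            (by positivity)
      _ = C := by
          rw [hC, show 4 * CK * T = 4 * CK * t + 4 * CK * (T - t) from by ring,
            Real.exp_add]
          ring
  calc |∫ t in (0:ℝ)..T, ∫ x in I, f t x v' * (g t x v' - g t x v)|
      ≤ C * |T - 0| := intervalIntegral.norm_integral_le_of_norm_le_const hbd
    _ = 2 * Cφ * Cμ * T * Real.exp (4 * CK * T) := by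
        rw [hC, sub_zero, abs_of_nonneg hT.le]; ring
end
end

section
/- Let K be measurable with 0 ≤ K ≤ C_K, let f be a bounded measurable mild solution of the homogeneous kinetic equation with initial datum φ, 0 ≤ φ ≤ C_φ, and let μ₁, μ₂ ∈ L¹(ℝ). Let ḡ be a mild solution of the adjoint kinetic equation −∂_t ḡ − v ∂_x ḡ = L̃(ḡ) − σ ḡ with final datum ḡ(T,x,v) = μ₂(x) − μ₁(x). Then for every measurable set I ⊆ ℝ and all v, v' ∈ V: |∫₀^T ∫_I f(t,x,v') (ḡ(t,x,v') − ḡ(t,x,v)) dx dt| ≤ 2 C_φ T e^{4 C_K T} ‖μ₂ − μ₁‖_{L¹(ℝ)}. In particular, the difference of the adjoint-represented measurement gradients for two measurement test functions μ₁, μ₂ tends to 0 as ‖μ₂ − μ₁‖_{L¹} → 0. -/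
open MeasureTheory Real Set Filter

noncomputable section

lemma poly_step (CK A B : ℝ) (n : ℕ) (τ : ℝ) :
    A + ∫ u in (0:ℝ)..τ, 4*CK * (A * (∑ k ∈ Finset.range n, (4*CK*u)^k / (k.factorial:ℝ))
        + B * (4*CK*u)^n / (n.factorial:ℝ))
    = A * (∑ k ∈ Finset.range (n+1), (4*CK*τ)^k / (k.factorial:ℝ))
        + B * (4*CK*τ)^(n+1) / ((n+1).factorial:ℝ) := by
  have hterm : ∀ (c : ℝ) (k : ℕ) (u : ℝ), c * (4*CK*u)^k / (k.factorial:ℝ)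
      = (c * (4*CK)^k / (k.factorial:ℝ)) * u^k := by
    intro c k u; rw [mul_pow]; ring
  have hint : ∀ u : ℝ, 4*CK * (A * (∑ k ∈ Finset.range n, (4*CK*u)^k / (k.factorial:ℝ))
        + B * (4*CK*u)^n / (n.factorial:ℝ))
      = (∑ k ∈ Finset.range n, (4*CK*(A * (4*CK)^k / (k.factorial:ℝ))) * u^k)
        + (4*CK*(B * (4*CK)^n / (n.factorial:ℝ))) * u^n := by
    intro u
    rw [Finset.mul_sum]
    have : ∀ k ∈ Finset.range n, A * ((4*CK*u)^k / (k.factorial:ℝ))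
        = (A * (4*CK)^k / (k.factorial:ℝ)) * u^k := by
      intro k _; rw [mul_pow]; ring
    rw [Finset.sum_congr rfl this, hterm B n u, mul_add, Finset.mul_sum]
    have h2 : ∀ k ∈ Finset.range n, 4*CK*((A * (4*CK)^k / (k.factorial:ℝ)) * u^k)
        = (4*CK*(A * (4*CK)^k / (k.factorial:ℝ))) * u^k := by intro k _; ring
    rw [Finset.sum_congr rfl h2]
    ring
  rw [intervalIntegral.integral_congr (fun u _ => hint u)]
  have hintgr1 : IntervalIntegrable
      (fun u => ∑ k ∈ Finset.range n, (4*CK*(A * (4*CK)^k / (k.factorial:ℝ))) * u^k)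
      volume 0 τ := by
    apply Continuous.intervalIntegrable
    exact continuous_finset_sum _ fun k _ => (continuous_const.mul (continuous_pow k))
  have hintgr2 : IntervalIntegrable
      (fun u => (4*CK*(B * (4*CK)^n / (n.factorial:ℝ))) * u^n) volume 0 τ :=
    (continuous_const.mul (continuous_pow n)).intervalIntegrable _ _
  rw [intervalIntegral.integral_add hintgr1 hintgr2,
    intervalIntegral.integral_finset_sum
      (fun k _ => show IntervalIntegrable
          (fun u => (4*CK*(A * (4*CK)^k / (k.factorial:ℝ))) * u^k) volume 0 τ from
        (continuous_const.mul (continuous_pow k)).intervalIntegrable _ _)]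
  have hI : ∀ (c : ℝ) (k : ℕ), (∫ u in (0:ℝ)..τ, c * u^k) = c * τ^(k+1)/(k+1) := by
    intro c k
    rw [intervalIntegral.integral_const_mul, integral_pow]
    norm_num
    ring
  simp only [hI]
  rw [Finset.sum_range_succ']
  have hfact : ∀ k : ℕ, (((k+1).factorial : ℝ)) = (k+1) * (k.factorial:ℝ) := by
    intro k; exact_mod_cast congrArg Nat.cast (Nat.factorial_succ k)
  have hptw : ∀ k ∈ Finset.range n,
      4*CK*(A * (4*CK)^k / (k.factorial:ℝ)) * τ^(k+1)/((k:ℝ)+1)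
      = A * ((4*CK*τ)^(k+1) / ((k+1).factorial:ℝ)) := by
    intro k _
    rw [hfact k, mul_pow]
    have h1 : (k.factorial:ℝ) ≠ 0 := Nat.cast_ne_zero.mpr (Nat.factorial_ne_zero k)
    have h2 : ((k:ℝ)+1) ≠ 0 := by positivity
    field_simp
    ring
  rw [Finset.sum_congr rfl hptw]
  have h1 : (n.factorial:ℝ) ≠ 0 := Nat.cast_ne_zero.mpr (Nat.factorial_ne_zero n)
  have h2 : ((n:ℝ)+1) ≠ 0 := by positivity
  rw [mul_add, Finset.mul_sum, hfact n, mul_pow]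
  simp only [pow_zero, Nat.factorial_zero]
  field_simp
  ring

lemma mildF_bound (T CK Cφ : ℝ) (hT : 0 < T) (hCK : 0 < CK) (hCφ : 0 ≤ Cφ)
    (K : ℝ → ℝ → ℝ → ℝ)
    (hK_nonneg : ∀ x v v', 0 ≤ K x v v') (hK_bdd : ∀ x v v', K x v v' ≤ CK)
    (φ : ℝ → ℝ → ℝ) (hφ_bds : ∀ x v, 0 ≤ φ x v ∧ φ x v ≤ Cφ)
    (f : ℝ → ℝ → ℝ → ℝ) (hf : IsMildF T K φ (fun _ _ _ => 0) f) :
    ∀ t ∈ Set.Icc (0:ℝ) T, ∀ x : ℝ, ∀ v ∈ ({1,-1} : Set ℝ),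
      |f t x v| ≤ Cφ * Real.exp (4*CK*t) := by
  obtain ⟨C, hC⟩ := hf.2.1
  have hC0 : 0 ≤ C := le_trans (abs_nonneg _) (hC 0 0 0)
  have main : ∀ n : ℕ, ∀ t ∈ Set.Icc (0:ℝ) T, ∀ x : ℝ, ∀ v ∈ ({1,-1} : Set ℝ),
      |f t x v| ≤ Cφ * (∑ k ∈ Finset.range n, (4*CK*t)^k / (k.factorial:ℝ))
        + C * (4*CK*t)^n / (n.factorial:ℝ) := by
    intro n
    induction n with
    | zero =>
      intro t ht x v hv
      simpa using hC t x v
    | succ n ih =>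
      intro t ht x v hv
      have ht0 : 0 ≤ t := ht.1
      rw [hf.2.2 t ht x v hv]
      set G : ℝ → ℝ := fun s =>
        K (x - v * (t - s)) v 1 * f s (x - v * (t - s)) 1
          + K (x - v * (t - s)) v (-1) * f s (x - v * (t - s)) (-1)
          - (K (x - v * (t - s)) 1 v + K (x - v * (t - s)) (-1) v)
              * f s (x - v * (t - s)) v
          + (fun _ _ _ => (0:ℝ)) s (x - v * (t - s)) v with hG
      set bnd : ℝ → ℝ := fun s =>
        Cφ * (∑ k ∈ Finset.range n, (4*CK*s)^k / (k.factorial:ℝ))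
          + C * (4*CK*s)^n / (n.factorial:ℝ) with hbnd
      have hbnd_nonneg : ∀ s, 0 ≤ s → 0 ≤ bnd s := by
        intro s hs
        have h1 : 0 ≤ ∑ k ∈ Finset.range n, (4*CK*s)^k / (k.factorial:ℝ) :=
          Finset.sum_nonneg fun k _ => by positivity
        have h2 : (0:ℝ) ≤ C * (4*CK*s)^n / (n.factorial:ℝ) := by positivity
        positivity
      have key : ∀ s ∈ Set.uIoc (0:ℝ) t, ‖G s‖ ≤ 4*CK * bnd s := by
        intro s hs
        rw [Set.uIoc_of_le ht0] at hs
        have hsIcc : s ∈ Set.Icc (0:ℝ) T := ⟨hs.1.le, hs.2.trans ht.2⟩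
        have hb1 := ih s hsIcc (x - v * (t - s)) 1 (by simp)
        have hb2 := ih s hsIcc (x - v * (t - s)) (-1) (by simp)
        have hbv := ih s hsIcc (x - v * (t - s)) v hv
        have hKb : ∀ w w', |K (x - v * (t - s)) w w'| ≤ CK := fun w w' =>
          abs_le.mpr ⟨by linarith [hK_nonneg (x - v * (t - s)) w w'],
            hK_bdd (x - v * (t - s)) w w'⟩
        rw [Real.norm_eq_abs, hG]
        simp only
        rw [add_zero]
        have e1 : |K (x - v * (t - s)) v 1 * f s (x - v * (t - s)) 1| ≤ CK * bnd s := by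
          rw [abs_mul]
          exact mul_le_mul (hKb v 1) hb1 (abs_nonneg _) hCK.le
        have e2 : |K (x - v * (t - s)) v (-1) * f s (x - v * (t - s)) (-1)| ≤ CK * bnd s := by
          rw [abs_mul]
          exact mul_le_mul (hKb v (-1)) hb2 (abs_nonneg _) hCK.le
        have e3 : |(K (x - v * (t - s)) 1 v + K (x - v * (t - s)) (-1) v)
            * f s (x - v * (t - s)) v| ≤ (2*CK) * bnd s := by
          rw [abs_mul]
          have : |K (x - v * (t - s)) 1 v + K (x - v * (t - s)) (-1) v| ≤ 2*CK := by
            calc |K (x - v * (t - s)) 1 v + K (x - v * (t - s)) (-1) v|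
                ≤ |K (x - v * (t - s)) 1 v| + |K (x - v * (t - s)) (-1) v| := abs_add_le _ _
              _ ≤ CK + CK := add_le_add (hKb 1 v) (hKb (-1) v)
              _ = 2*CK := by ring
          exact mul_le_mul this hbv (abs_nonneg _) (by positivity)
        calc |K (x - v * (t - s)) v 1 * f s (x - v * (t - s)) 1
              + K (x - v * (t - s)) v (-1) * f s (x - v * (t - s)) (-1)
              - (K (x - v * (t - s)) 1 v + K (x - v * (t - s)) (-1) v)
                  * f s (x - v * (t - s)) v|
            ≤ |K (x - v * (t - s)) v 1 * f s (x - v * (t - s)) 1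
              + K (x - v * (t - s)) v (-1) * f s (x - v * (t - s)) (-1)|
              + |(K (x - v * (t - s)) 1 v + K (x - v * (t - s)) (-1) v)
                  * f s (x - v * (t - s)) v| := abs_sub _ _
          _ ≤ (|K (x - v * (t - s)) v 1 * f s (x - v * (t - s)) 1|
              + |K (x - v * (t - s)) v (-1) * f s (x - v * (t - s)) (-1)|)
              + |(K (x - v * (t - s)) 1 v + K (x - v * (t - s)) (-1) v)
                  * f s (x - v * (t - s)) v| := by
                exact add_le_add_left (abs_add_le _ _) _
          _ ≤ (CK * bnd s + CK * bnd s) + (2*CK) * bnd s := by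
                exact add_le_add (add_le_add e1 e2) e3
          _ = 4*CK * bnd s := by ring
      have hbnd_cont : Continuous fun s => 4*CK * bnd s := by
        apply continuous_const.mul
        apply Continuous.add
        · exact continuous_const.mul (continuous_finset_sum _ fun k _ =>
            ((continuous_const.mul continuous_id).pow k).div_const _)
        · exact (continuous_const.mul ((continuous_const.mul continuous_id).pow n)).div_const _
      have hIbnd : IntervalIntegrable (fun s => 4*CK * bnd s) volume 0 t :=
        hbnd_cont.intervalIntegrable _ _
      have hle : |∫ s in (0:ℝ)..t, G s| ≤ |∫ s in (0:ℝ)..t, 4*CK * bnd s| := by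
        have := intervalIntegral.norm_integral_le_abs_of_norm_le
          (f := G) (g := fun s => 4*CK * bnd s) (μ := volume) (a := 0) (b := t)
          ((ae_restrict_iff' measurableSet_uIoc).mpr (Eventually.of_forall key)) hIbnd
        simpa [Real.norm_eq_abs] using this
      have habs : |φ (x - v * t) v| ≤ Cφ := by
        rcases hφ_bds (x - v * t) v with ⟨h0, h1⟩
        rw [abs_of_nonneg h0]; exact h1
      have hval : Cφ + ∫ s in (0:ℝ)..t, 4*CK * bnd s
          = Cφ * (∑ k ∈ Finset.range (n+1), (4*CK*t)^k / (k.factorial:ℝ))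
            + C * (4*CK*t)^(n+1) / ((n+1).factorial:ℝ) := by
        simpa [hbnd] using poly_step CK Cφ C n t
      have hintnn : 0 ≤ ∫ s in (0:ℝ)..t, 4*CK * bnd s := by
        apply intervalIntegral.integral_nonneg ht0
        intro s hs
        have := hbnd_nonneg s hs.1
        positivity
      calc |φ (x - v * t) v + ∫ s in (0:ℝ)..t, G s|
          ≤ |φ (x - v * t) v| + |∫ s in (0:ℝ)..t, G s| := abs_add_le _ _
        _ ≤ Cφ + |∫ s in (0:ℝ)..t, 4*CK * bnd s| := add_le_add habs hle
        _ = Cφ + ∫ s in (0:ℝ)..t, 4*CK * bnd s := by rw [abs_of_nonneg hintnn]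
        _ = _ := hval
  intro t ht x v hv
  have hxt : 0 ≤ 4*CK*t := by have := ht.1; positivity
  have hn : ∀ n : ℕ, |f t x v| ≤ Cφ * Real.exp (4*CK*t) + C * ((4*CK*t)^n / (n.factorial:ℝ)) := by
    intro n
    calc |f t x v| ≤ Cφ * (∑ k ∈ Finset.range n, (4*CK*t)^k / (k.factorial:ℝ))
          + C * (4*CK*t)^n / (n.factorial:ℝ) := main n t ht x v hv
      _ ≤ Cφ * Real.exp (4*CK*t) + C * ((4*CK*t)^n / (n.factorial:ℝ)) := by
          rw [mul_div_assoc]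
          gcongr
          exact Real.sum_le_exp_of_nonneg hxt n
  have htend : Tendsto (fun n : ℕ => Cφ * Real.exp (4*CK*t) + C * ((4*CK*t)^n / (n.factorial:ℝ)))
      atTop (nhds (Cφ * Real.exp (4*CK*t))) := by
    have h0 : Tendsto (fun n : ℕ => (4*CK*t)^n / (n.factorial:ℝ)) atTop (nhds 0) :=
      FloorSemiring.tendsto_pow_div_factorial_atTop (4*CK*t)
    have := (h0.const_mul C).const_add (Cφ * Real.exp (4*CK*t))
    simpa using this
  exact ge_of_tendsto' htend hn

lemma mildG_bound (T CK : ℝ) (hT : 0 < T) (hCK : 0 < CK)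
    (K : ℝ → ℝ → ℝ → ℝ)
    (hK_nonneg : ∀ x v v', 0 ≤ K x v v') (hK_bdd : ∀ x v v', K x v v' ≤ CK)
    (μ : ℝ → ℝ) (hμ : Integrable μ)
    (g : ℝ → ℝ → ℝ → ℝ) (hg : IsMildG T K 1 (fun x _ => μ x) (fun _ _ _ => 0) g) :
    ∀ t ∈ Set.Icc (0:ℝ) T,
      (∫ x : ℝ, |g t x 1|) + (∫ x : ℝ, |g t x (-1)|)
        ≤ 2 * (∫ x : ℝ, |μ x|) * Real.exp (4*CK*(T - t)) := by
  classical
  set M : ℝ := ∫ x : ℝ, |μ x| with hM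
  have hM0 : 0 ≤ M := integral_nonneg fun x => abs_nonneg _
  have hv1 : (1:ℝ) ∈ ({1,-1}:Set ℝ) := by simp
  have hv2 : (-1:ℝ) ∈ ({1,-1}:Set ℝ) := by simp
  have gmeas : Measurable fun p : ℝ × ℝ × ℝ => g p.1 p.2.1 p.2.2 := hg.1
  have gsec : ∀ w : ℝ, Measurable fun p : ℝ × ℝ => g p.1 p.2 w := fun w =>
    gmeas.comp (measurable_fst.prodMk (measurable_snd.prodMk measurable_const))
  have gx : ∀ (s w : ℝ), Measurable fun x : ℝ => g s x w := fun s w =>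
    (gsec w).comp (measurable_const.prodMk measurable_id)
  set Nin : ℝ → ℝ → ENNReal := fun v t => ∫⁻ x : ℝ, ENNReal.ofReal |g t x v| with hNin
  have hNmeas : ∀ v : ℝ, Measurable fun s => Nin v s := by
    intro v
    exact Measurable.lintegral_prod_right
      (f := fun s x => ENNReal.ofReal |g s x v|) ((gsec v).abs.ennreal_ofReal)
  have hNeq : ∀ t ∈ Set.Icc (0:ℝ) T, ∀ v ∈ ({1,-1}:Set ℝ),
      Nin v t = ENNReal.ofReal (∫ x : ℝ, |g t x v|) := by
    intro t ht v hv
    exact (MeasureTheory.ofReal_integral_eq_lintegral_ofReal (hg.2.1 t ht v hv).abs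
      (Eventually.of_forall fun x => abs_nonneg _)).symm
  obtain ⟨Cg, hCg⟩ := hg.2.2.1
  have hCg0 : (0:ℝ) ≤ Cg :=
    le_trans (integral_nonneg fun x => abs_nonneg _) (hCg 0 ⟨le_refl _, hT.le⟩ 1 hv1)
  have hμM : (∫⁻ y : ℝ, ENNReal.ofReal |μ y|) = ENNReal.ofReal M :=
    (MeasureTheory.ofReal_integral_eq_lintegral_ofReal hμ.abs
      (Eventually.of_forall fun x => abs_nonneg _)).symm
  -- the basic integral inequality
  have star : ∀ t ∈ Set.Icc (0:ℝ) T, ∀ v ∈ ({1,-1}:Set ℝ),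
      Nin v t ≤ ENNReal.ofReal M + ∫⁻ s in Set.Ioc t T,
        (ENNReal.ofReal CK * (Nin 1 s + Nin (-1) s) + ENNReal.ofReal (2*CK) * Nin v s) := by
    intro t ht v hv
    have htT : t ≤ T := ht.2
    set B : ℝ → ℝ → ℝ := fun s x => CK * |g s (x + v*(s-t)) 1| + CK * |g s (x + v*(s-t)) (-1)|
        + 2*CK * |g s (x + v*(s-t)) v| with hB
    have hcomp : ∀ w : ℝ, Measurable fun p : ℝ × ℝ => g p.2 (p.1 + v*(p.2 - t)) w := by
      intro w
      exact (gsec w).comp (measurable_snd.prodMk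
        (measurable_fst.add ((measurable_snd.sub measurable_const).const_mul v)))
    have hBmeas : Measurable fun p : ℝ × ℝ => ENNReal.ofReal (B p.2 p.1) := by
      apply Measurable.ennreal_ofReal
      exact (((hcomp 1).abs.const_mul CK).add ((hcomp (-1)).abs.const_mul CK)).add
        ((hcomp v).abs.const_mul (2*CK))
    have hBnn : ∀ s x, 0 ≤ B s x := by
      intro s x; rw [hB]; positivity
    have hBxmeas : ∀ x : ℝ, Measurable fun s => B s x := by
      intro x
      have : ∀ w : ℝ, Measurable fun s : ℝ => g s (x + v*(s - t)) w := fun w =>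
        (gsec w).comp (measurable_id.prodMk
          (measurable_const.add ((measurable_id.sub measurable_const).const_mul v)))
      exact (((this 1).abs.const_mul CK).add ((this (-1)).abs.const_mul CK)).add
        ((this v).abs.const_mul (2*CK))
    -- pointwise inequality
    have pt : ∀ x : ℝ, ENNReal.ofReal |g t x v| ≤ ENNReal.ofReal |μ (x + v*(T-t))| +
        ∫⁻ s in Set.Ioc t T, ENNReal.ofReal (B s x) := by
      intro x
      by_cases hfin : (∫⁻ s in Set.Ioc t T, ENNReal.ofReal (B s x)) = ⊤
      · rw [hfin]; simp
      have hBint : IntegrableOn (fun s => B s x) (Set.Ioc t T) := by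
        refine ⟨(hBxmeas x).aestronglyMeasurable, ?_⟩
        rw [hasFiniteIntegral_iff_ofReal (Eventually.of_forall fun s => hBnn s x)]
        exact lt_top_iff_ne_top.mpr hfin
      have hII : IntervalIntegrable (fun s => B s x) volume t T :=
        (intervalIntegrable_iff_integrableOn_Ioc_of_le htT).mpr hBint
      have hmild := hg.2.2.2 t ht x v hv
      set G : ℝ → ℝ := fun s =>
        1 * (K (x + v * (s - t)) 1 v * g s (x + v * (s - t)) 1
              + K (x + v * (s - t)) (-1) v * g s (x + v * (s - t)) (-1))
          - (K (x + v * (s - t)) 1 v + K (x + v * (s - t)) (-1) v)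
              * g s (x + v * (s - t)) v
          + (fun _ _ _ => (0:ℝ)) s (x + v * (s - t)) v with hG
      have hGle : ∀ s ∈ Set.uIoc t T, ‖G s‖ ≤ B s x := by
        intro s hs
        have hKb : ∀ w w', |K (x + v*(s-t)) w w'| ≤ CK := fun w w' =>
          abs_le.mpr ⟨by linarith [hK_nonneg (x + v*(s-t)) w w'], hK_bdd (x + v*(s-t)) w w'⟩
        rw [Real.norm_eq_abs, hG]
        simp only [one_mul, add_zero]
        have e1 : |K (x + v*(s-t)) 1 v * g s (x + v*(s-t)) 1
            + K (x + v*(s-t)) (-1) v * g s (x + v*(s-t)) (-1)|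
            ≤ CK * |g s (x + v*(s-t)) 1| + CK * |g s (x + v*(s-t)) (-1)| := by
          calc |K (x + v*(s-t)) 1 v * g s (x + v*(s-t)) 1
              + K (x + v*(s-t)) (-1) v * g s (x + v*(s-t)) (-1)|
              ≤ |K (x + v*(s-t)) 1 v * g s (x + v*(s-t)) 1|
                + |K (x + v*(s-t)) (-1) v * g s (x + v*(s-t)) (-1)| := abs_add_le _ _
            _ ≤ CK * |g s (x + v*(s-t)) 1| + CK * |g s (x + v*(s-t)) (-1)| := by
                rw [abs_mul, abs_mul]
                exact add_le_add
                  (mul_le_mul_of_nonneg_right (hKb 1 v) (abs_nonneg _))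
                  (mul_le_mul_of_nonneg_right (hKb (-1) v) (abs_nonneg _))
        have e2 : |(K (x + v*(s-t)) 1 v + K (x + v*(s-t)) (-1) v) * g s (x + v*(s-t)) v|
            ≤ 2*CK * |g s (x + v*(s-t)) v| := by
          rw [abs_mul]
          apply mul_le_mul_of_nonneg_right _ (abs_nonneg _)
          calc |K (x + v*(s-t)) 1 v + K (x + v*(s-t)) (-1) v|
              ≤ |K (x + v*(s-t)) 1 v| + |K (x + v*(s-t)) (-1) v| := abs_add_le _ _
            _ ≤ CK + CK := add_le_add (hKb 1 v) (hKb (-1) v)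
            _ = 2*CK := by ring
        calc |K (x + v*(s-t)) 1 v * g s (x + v*(s-t)) 1
              + K (x + v*(s-t)) (-1) v * g s (x + v*(s-t)) (-1)
              - (K (x + v*(s-t)) 1 v + K (x + v*(s-t)) (-1) v) * g s (x + v*(s-t)) v|
            ≤ |K (x + v*(s-t)) 1 v * g s (x + v*(s-t)) 1
              + K (x + v*(s-t)) (-1) v * g s (x + v*(s-t)) (-1)|
              + |(K (x + v*(s-t)) 1 v + K (x + v*(s-t)) (-1) v) * g s (x + v*(s-t)) v| :=
              abs_sub _ _
          _ ≤ (CK * |g s (x + v*(s-t)) 1| + CK * |g s (x + v*(s-t)) (-1)|)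
              + 2*CK * |g s (x + v*(s-t)) v| := add_le_add e1 e2
          _ = B s x := by rw [hB]
      have h1 : |∫ s in t..T, G s| ≤ |∫ s in t..T, B s x| := by
        have := intervalIntegral.norm_integral_le_abs_of_norm_le (f := G)
          (g := fun s => B s x) (μ := volume) (a := t) (b := T)
          ((ae_restrict_iff' measurableSet_uIoc).mpr (Eventually.of_forall hGle)) hII
        simpa [Real.norm_eq_abs] using this
      have hBint_nn : 0 ≤ ∫ s in Set.Ioc t T, B s x :=
        setIntegral_nonneg measurableSet_Ioc fun s _ => hBnn s x
      have h2 : (∫ s in t..T, B s x) = ∫ s in Set.Ioc t T, B s x :=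
        intervalIntegral.integral_of_le htT
      have h3 : ENNReal.ofReal (∫ s in Set.Ioc t T, B s x)
          = ∫⁻ s in Set.Ioc t T, ENNReal.ofReal (B s x) :=
        MeasureTheory.ofReal_integral_eq_lintegral_ofReal hBint
          (ae_restrict_of_ae (Eventually.of_forall fun s => hBnn s x))
      calc ENNReal.ofReal |g t x v|
          = ENNReal.ofReal |μ (x + v*(T-t)) + ∫ s in t..T, G s| := by rw [hmild]
        _ ≤ ENNReal.ofReal (|μ (x + v*(T-t))| + |∫ s in t..T, G s|) :=
            ENNReal.ofReal_le_ofReal (abs_add_le _ _)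
        _ ≤ ENNReal.ofReal (|μ (x + v*(T-t))| + ∫ s in Set.Ioc t T, B s x) := by
            apply ENNReal.ofReal_le_ofReal
            have : |∫ s in t..T, B s x| = ∫ s in Set.Ioc t T, B s x := by
              rw [h2] at *; exact abs_of_nonneg hBint_nn
            linarith [h1, this.le, this.ge]
        _ = ENNReal.ofReal |μ (x + v*(T-t))| + ENNReal.ofReal (∫ s in Set.Ioc t T, B s x) :=
            ENNReal.ofReal_add (abs_nonneg _) hBint_nn
        _ = _ := by rw [h3]
    -- integrate in x
    have haemu : AEMeasurable (fun x : ℝ => ENNReal.ofReal |μ (x + v*(T-t))|) volume := by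
      have h0 : AEMeasurable μ volume := hμ.aemeasurable
      have h1 := h0.comp_quasiMeasurePreserving
        (measurePreserving_add_right volume (v*(T-t))).quasiMeasurePreserving
      exact (measurable_abs.comp_aemeasurable h1).ennreal_ofReal
    have hfirst : (∫⁻ x : ℝ, ENNReal.ofReal |μ (x + v*(T-t))|) = ENNReal.ofReal M := by
      rw [lintegral_add_right_eq_self (fun y => ENNReal.ofReal |μ y|) (v*(T-t))]
      exact hμM
    have hswap : (∫⁻ x : ℝ, ∫⁻ s in Set.Ioc t T, ENNReal.ofReal (B s x))
        = ∫⁻ s in Set.Ioc t T, ∫⁻ x : ℝ, ENNReal.ofReal (B s x) :=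
      lintegral_lintegral_swap (f := fun x s => ENNReal.ofReal (B s x)) hBmeas.aemeasurable
    have hinner : ∀ s ∈ Set.Ioc t T, (∫⁻ x : ℝ, ENNReal.ofReal (B s x)) =
        ENNReal.ofReal CK * (Nin 1 s + Nin (-1) s) + ENNReal.ofReal (2*CK) * Nin v s := by
      intro s _
      have tr : ∀ w : ℝ, (∫⁻ x : ℝ, ENNReal.ofReal |g s (x + v*(s-t)) w|) = Nin w s := fun w =>
        lintegral_add_right_eq_self (fun y => ENNReal.ofReal |g s y w|) (v*(s-t))
      have hxm : ∀ w : ℝ, Measurable fun x : ℝ => ENNReal.ofReal |g s (x + v*(s-t)) w| := by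
        intro w
        exact (((gx s w).comp (measurable_id.add_const _)).abs).ennreal_ofReal
      have expand : ∀ x : ℝ, ENNReal.ofReal (B s x) =
          (ENNReal.ofReal CK * ENNReal.ofReal |g s (x + v*(s-t)) 1|
          + ENNReal.ofReal CK * ENNReal.ofReal |g s (x + v*(s-t)) (-1)|)
          + ENNReal.ofReal (2*CK) * ENNReal.ofReal |g s (x + v*(s-t)) v| := by
        intro x
        rw [hB]
        rw [ENNReal.ofReal_add (by positivity) (by positivity),
          ENNReal.ofReal_add (by positivity) (by positivity),
          ENNReal.ofReal_mul hCK.le, ENNReal.ofReal_mul hCK.le,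
          ENNReal.ofReal_mul (by positivity)]
      rw [lintegral_congr expand]
      rw [lintegral_add_left (show Measurable (fun x => ENNReal.ofReal CK * ENNReal.ofReal |g s (x + v*(s-t)) 1|
        + ENNReal.ofReal CK * ENNReal.ofReal |g s (x + v*(s-t)) (-1)|) from
        ((hxm 1).const_mul _).add ((hxm (-1)).const_mul _))]
      rw [lintegral_add_left ((hxm 1).const_mul _)]
      rw [lintegral_const_mul _ (hxm 1), lintegral_const_mul _ (hxm (-1)),
        lintegral_const_mul _ (hxm v)]
      rw [tr 1, tr (-1), tr v]
      ring
    calc Nin v t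
        ≤ ∫⁻ x : ℝ, (ENNReal.ofReal |μ (x + v*(T-t))| +
            ∫⁻ s in Set.Ioc t T, ENNReal.ofReal (B s x)) := lintegral_mono pt
      _ = (∫⁻ x : ℝ, ENNReal.ofReal |μ (x + v*(T-t))|) +
            ∫⁻ x : ℝ, ∫⁻ s in Set.Ioc t T, ENNReal.ofReal (B s x) :=
          lintegral_add_left' haemu _
      _ = ENNReal.ofReal M + ∫⁻ s in Set.Ioc t T, ∫⁻ x : ℝ, ENNReal.ofReal (B s x) := by
          rw [hfirst, hswap]
      _ = _ := by
          rw [setLIntegral_congr_fun measurableSet_Ioc hinner]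
  -- sum over the two velocities
  set Nt : ℝ → ENNReal := fun s => Nin 1 s + Nin (-1) s with hNt
  have hsum : ENNReal.ofReal CK + ENNReal.ofReal CK + ENNReal.ofReal (2*CK)
      = ENNReal.ofReal (4*CK) := by
    rw [← ENNReal.ofReal_add hCK.le hCK.le, ← ENNReal.ofReal_add (by positivity) (by positivity)]
    congr 1
    ring
  have star2 : ∀ t ∈ Set.Icc (0:ℝ) T, Nt t ≤ ENNReal.ofReal (2*M)
      + ∫⁻ s in Set.Ioc t T, ENNReal.ofReal (4*CK) * Nt s := by
    intro t ht
    have hA1 : Measurable fun s => ENNReal.ofReal CK * (Nin 1 s + Nin (-1) s)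
        + ENNReal.ofReal (2*CK) * Nin 1 s :=
      (((hNmeas 1).add (hNmeas (-1))).const_mul _).add ((hNmeas 1).const_mul _)
    have key : ∀ s : ℝ,
        (ENNReal.ofReal CK * (Nin 1 s + Nin (-1) s) + ENNReal.ofReal (2*CK) * Nin 1 s)
        + (ENNReal.ofReal CK * (Nin 1 s + Nin (-1) s) + ENNReal.ofReal (2*CK) * Nin (-1) s)
        = ENNReal.ofReal (4*CK) * Nt s := by
      intro s
      rw [hNt, ← hsum]
      ring
    calc Nt t ≤ (ENNReal.ofReal M + ∫⁻ s in Set.Ioc t T,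
          (ENNReal.ofReal CK * (Nin 1 s + Nin (-1) s) + ENNReal.ofReal (2*CK) * Nin 1 s))
        + (ENNReal.ofReal M + ∫⁻ s in Set.Ioc t T,
          (ENNReal.ofReal CK * (Nin 1 s + Nin (-1) s) + ENNReal.ofReal (2*CK) * Nin (-1) s)) :=
        add_le_add (star t ht 1 hv1) (star t ht (-1) hv2)
      _ = ENNReal.ofReal (2*M) + ∫⁻ s in Set.Ioc t T,
          ((ENNReal.ofReal CK * (Nin 1 s + Nin (-1) s) + ENNReal.ofReal (2*CK) * Nin 1 s)
          + (ENNReal.ofReal CK * (Nin 1 s + Nin (-1) s) + ENNReal.ofReal (2*CK) * Nin (-1) s)) := by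
          rw [lintegral_add_left hA1]
          rw [show (2:ℝ)*M = M + M by ring, ENNReal.ofReal_add hM0 hM0]
          ring
      _ = _ := by rw [lintegral_congr key]
  -- Grönwall iteration
  have main : ∀ n : ℕ, ∀ t ∈ Set.Icc (0:ℝ) T,
      Nt t ≤ ENNReal.ofReal (2*M * (∑ k ∈ Finset.range n, (4*CK*(T-t))^k / (k.factorial:ℝ))
        + 2*Cg * (4*CK*(T-t))^n / (n.factorial:ℝ)) := by
    intro n
    induction n with
    | zero =>
      intro t ht
      rw [hNt]
      simp only [hNeq t ht 1 hv1, hNeq t ht (-1) hv2]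
      rw [← ENNReal.ofReal_add (integral_nonneg fun _ => abs_nonneg _)
        (integral_nonneg fun _ => abs_nonneg _)]
      apply ENNReal.ofReal_le_ofReal
      simp only [Finset.range_zero, Finset.sum_empty, mul_zero, pow_zero, mul_one,
        Nat.factorial_zero, Nat.cast_one, zero_add]
      have := add_le_add (hCg t ht 1 hv1) (hCg t ht (-1) hv2)
      linarith
    | succ n ih =>
      intro t ht
      have htT : t ≤ T := ht.2
      have ht0 : 0 ≤ t := ht.1
      set hfun : ℝ → ℝ := fun u => 4*CK * (2*M * (∑ k ∈ Finset.range n, (4*CK*u)^k / (k.factorial:ℝ))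
          + 2*Cg * (4*CK*u)^n / (n.factorial:ℝ)) with hhfun
      have ptb : ∀ s ∈ Set.Ioc t T, ENNReal.ofReal (4*CK) * Nt s
          ≤ ENNReal.ofReal (hfun (T - s)) := by
        intro s hs
        have hsIcc : s ∈ Set.Icc (0:ℝ) T := ⟨le_of_lt (lt_of_le_of_lt ht0 hs.1), hs.2⟩
        rw [hhfun]
        simp only
        conv_rhs => rw [ENNReal.ofReal_mul (show (0:ℝ) ≤ 4*CK by positivity)]
        exact mul_le_mul_right (ih s hsIcc) _
      have mono : (∫⁻ s in Set.Ioc t T, ENNReal.ofReal (4*CK) * Nt s)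
          ≤ ∫⁻ s in Set.Ioc t T, ENNReal.ofReal (hfun (T - s)) := by
        apply lintegral_mono_ae
        rw [ae_restrict_iff' measurableSet_Ioc]
        exact Eventually.of_forall ptb
      have hcont : Continuous fun s : ℝ => hfun (T - s) := by
        rw [hhfun]
        apply continuous_const.mul
        apply Continuous.add
        · apply continuous_const.mul
          apply continuous_finset_sum
          intro k _
          exact ((continuous_const.mul (continuous_const.sub continuous_id)).pow k).div_const _
        · exact (continuous_const.mul
            ((continuous_const.mul (continuous_const.sub continuous_id)).pow n)).div_const _
      have hfun_nn : ∀ u : ℝ, 0 ≤ u → 0 ≤ hfun u := by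
        intro u hu
        rw [hhfun]
        simp only
        have hb : (0:ℝ) ≤ 4*CK*u := by positivity
        have h1 : 0 ≤ ∑ k ∈ Finset.range n, (4*CK*u)^k / (k.factorial:ℝ) :=
          Finset.sum_nonneg fun k _ => div_nonneg (pow_nonneg hb k) (Nat.cast_nonneg _)
        have h2 : (0:ℝ) ≤ 2*Cg * (4*CK*u)^n / (n.factorial:ℝ) :=
          div_nonneg (mul_nonneg (by linarith) (pow_nonneg hb n)) (Nat.cast_nonneg _)
        have h3 : (0:ℝ) ≤ 2*M * ∑ k ∈ Finset.range n, (4*CK*u)^k / (k.factorial:ℝ) :=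
          mul_nonneg (by linarith) h1
        positivity
      have hbnn : ∀ s ∈ Set.Ioc t T, 0 ≤ hfun (T - s) := by
        intro s hs
        exact hfun_nn _ (by linarith [hs.2])
      have heq : (∫⁻ s in Set.Ioc t T, ENNReal.ofReal (hfun (T - s)))
          = ENNReal.ofReal (∫ s in t..T, hfun (T - s)) := by
        rw [intervalIntegral.integral_of_le htT]
        exact (MeasureTheory.ofReal_integral_eq_lintegral_ofReal
          (hcont.integrableOn_Ioc)
          ((ae_restrict_iff' measurableSet_Ioc).mpr (Eventually.of_forall hbnn))).symm
      have hcs : (∫ s in t..T, hfun (T - s)) = ∫ u in (0:ℝ)..(T-t), hfun u := by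
        rw [intervalIntegral.integral_comp_sub_left (a := t) (b := T) (f := hfun) T]
        rw [sub_self]
      calc Nt t ≤ ENNReal.ofReal (2*M)
            + ∫⁻ s in Set.Ioc t T, ENNReal.ofReal (4*CK) * Nt s := star2 t ht
        _ ≤ ENNReal.ofReal (2*M) + ENNReal.ofReal (∫ u in (0:ℝ)..(T-t), hfun u) := by
            apply add_le_add_right
            rw [← hcs, ← heq]
            exact mono
        _ = ENNReal.ofReal (2*M + ∫ u in (0:ℝ)..(T-t), hfun u) := by
            rw [ENNReal.ofReal_add (by linarith)]
            apply intervalIntegral.integral_nonneg (by linarith)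
            intro u hu
            exact hfun_nn u hu.1
        _ = _ := by
            congr 1
            rw [hhfun]
            exact poly_step CK (2*M) (2*Cg) n (T-t)
  -- pass to the limit
  intro t ht
  have hτ : 0 ≤ 4*CK*(T-t) := mul_nonneg (by positivity) (by linarith [ht.2])
  have hn : ∀ n : ℕ, Nt t ≤ ENNReal.ofReal (2*M * Real.exp (4*CK*(T-t))
      + 2*Cg * ((4*CK*(T-t))^n / (n.factorial:ℝ))) := by
    intro n
    refine (main n t ht).trans (ENNReal.ofReal_le_ofReal ?_)
    rw [mul_div_assoc]
    gcongr
    exact Real.sum_le_exp_of_nonneg hτ n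
  have htend : Tendsto (fun n : ℕ => ENNReal.ofReal (2*M * Real.exp (4*CK*(T-t))
      + 2*Cg * ((4*CK*(T-t))^n / (n.factorial:ℝ)))) atTop
      (nhds (ENNReal.ofReal (2*M * Real.exp (4*CK*(T-t))))) := by
    apply ENNReal.tendsto_ofReal
    have h0 : Tendsto (fun n : ℕ => (4*CK*(T-t))^n / (n.factorial:ℝ)) atTop (nhds 0) :=
      FloorSemiring.tendsto_pow_div_factorial_atTop (4*CK*(T-t))
    have := (h0.const_mul (2*Cg)).const_add (2*M * Real.exp (4*CK*(T-t)))
    simpa using this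
  have hfinal : Nt t ≤ ENNReal.ofReal (2*M * Real.exp (4*CK*(T-t))) :=
    ge_of_tendsto' htend hn
  have hfinal' : Nin 1 t + Nin (-1) t ≤ ENNReal.ofReal (2*M * Real.exp (4*CK*(T-t))) := hfinal
  rw [hNeq t ht 1 hv1, hNeq t ht (-1) hv2,
    ← ENNReal.ofReal_add (integral_nonneg fun _ => abs_nonneg _)
      (integral_nonneg fun _ => abs_nonneg _)] at hfinal'
  have := (ENNReal.ofReal_le_ofReal_iff
    (mul_nonneg (by linarith) (Real.exp_nonneg _))).mp hfinal'
  linarith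

lemma key_bound (T CK Cφ : ℝ) (hT : 0 < T) (hCK : 0 < CK) (hCφ : 0 ≤ Cφ)
    (K : ℝ → ℝ → ℝ → ℝ)
    (hK_nonneg : ∀ x v v', 0 ≤ K x v v') (hK_bdd : ∀ x v v', K x v v' ≤ CK)
    (φ : ℝ → ℝ → ℝ) (hφ_bds : ∀ x v, 0 ≤ φ x v ∧ φ x v ≤ Cφ)
    (f : ℝ → ℝ → ℝ → ℝ) (hf : IsMildF T K φ (fun _ _ _ => 0) f)
    (μ : ℝ → ℝ) (hμ : Integrable μ)
    (g : ℝ → ℝ → ℝ → ℝ) (hg : IsMildG T K 1 (fun x _ => μ x) (fun _ _ _ => 0) g)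
    (I : Set ℝ) (hI : MeasurableSet I) :
    ∀ v ∈ ({1,-1} : Set ℝ), ∀ v' ∈ ({1,-1} : Set ℝ),
      |∫ t in (0:ℝ)..T, ∫ x in I, f t x v' * (g t x v' - g t x v)|
        ≤ 2 * Cφ * T * Real.exp (4*CK*T) * ∫ x : ℝ, |μ x| := by
  intro v hv v' hv'
  set M := ∫ x : ℝ, |μ x| with hM
  have hM0 : 0 ≤ M := integral_nonneg fun _ => abs_nonneg _
  have hRHS0 : (0:ℝ) ≤ 2 * Cφ * T * Real.exp (4*CK*T) * M := by positivity
  by_cases hvv : v = v'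
  · subst hvv
    simp only [sub_self, mul_zero, integral_zero, intervalIntegral.integral_zero, abs_zero]
    exact hRHS0
  have hfb := mildF_bound T CK Cφ hT hCK hCφ K hK_nonneg hK_bdd φ hφ_bds f hf
  have hgb := mildG_bound T CK hT hCK K hK_nonneg hK_bdd μ hμ g hg
  have hvcase : v = 1 ∨ v = -1 := by simpa using hv
  have hv'case : v' = 1 ∨ v' = -1 := by simpa using hv'
  have hsum : ∀ t ∈ Set.Icc (0:ℝ) T,
      (∫ x : ℝ, |g t x v'|) + (∫ x : ℝ, |g t x v|) ≤ 2*M*Real.exp (4*CK*(T-t)) := by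
    intro t ht
    rcases hvcase with rfl | rfl <;> rcases hv'case with rfl | rfl
    · exact absurd rfl hvv
    · have := hgb t ht; linarith
    · have := hgb t ht; linarith
    · exact absurd rfl hvv
  have hpt : ∀ t ∈ Set.uIoc (0:ℝ) T,
      ‖∫ x in I, f t x v' * (g t x v' - g t x v)‖ ≤ 2*Cφ*M*Real.exp (4*CK*T) := by
    intro t htI
    rw [Set.uIoc_of_le hT.le] at htI
    have ht : t ∈ Set.Icc (0:ℝ) T := ⟨htI.1.le, htI.2⟩
    have hgint' : Integrable (fun x => g t x v') := hg.2.1 t ht v' hv'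
    have hgint : Integrable (fun x => g t x v) := hg.2.1 t ht v hv
    have habssum : Integrable (fun x : ℝ => |g t x v'| + |g t x v|) := hgint'.abs.add hgint.abs
    have hgg : IntegrableOn
        (fun x => Cφ*Real.exp (4*CK*t) * (|g t x v'| + |g t x v|)) I volume :=
      (habssum.const_mul _).integrableOn
    have step1 : ‖∫ x in I, f t x v' * (g t x v' - g t x v)‖
        ≤ ∫ x in I, ‖f t x v' * (g t x v' - g t x v)‖ := norm_integral_le_integral_norm _
    have step2 : (∫ x in I, ‖f t x v' * (g t x v' - g t x v)‖)
        ≤ ∫ x in I, Cφ*Real.exp (4*CK*t) * (|g t x v'| + |g t x v|) := by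
      apply integral_mono_of_nonneg (Eventually.of_forall fun x => norm_nonneg _) hgg
      apply Eventually.of_forall
      intro x
      simp only [Real.norm_eq_abs, abs_mul]
      have h1 : |f t x v'| ≤ Cφ * Real.exp (4*CK*t) := hfb t ht x v' hv'
      have h2 : |g t x v' - g t x v| ≤ |g t x v'| + |g t x v| := abs_sub _ _
      exact mul_le_mul h1 h2 (abs_nonneg _) (by positivity)
    have step3 : (∫ x in I, Cφ*Real.exp (4*CK*t) * (|g t x v'| + |g t x v|))
        ≤ Cφ*Real.exp (4*CK*t) * (2*M*Real.exp (4*CK*(T-t))) := by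
      rw [integral_const_mul]
      apply mul_le_mul_of_nonneg_left _ (by positivity)
      calc (∫ x in I, (|g t x v'| + |g t x v|))
          ≤ ∫ x : ℝ, (|g t x v'| + |g t x v|) :=
            setIntegral_le_integral habssum (Eventually.of_forall fun x => by positivity)
        _ = (∫ x : ℝ, |g t x v'|) + ∫ x : ℝ, |g t x v| := integral_add hgint'.abs hgint.abs
        _ ≤ 2*M*Real.exp (4*CK*(T-t)) := hsum t ht
    have hexp : Real.exp (4*CK*t) * Real.exp (4*CK*(T-t)) = Real.exp (4*CK*T) := by
      rw [← Real.exp_add]; congr 1; ring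
    calc ‖∫ x in I, f t x v' * (g t x v' - g t x v)‖
        ≤ Cφ*Real.exp (4*CK*t) * (2*M*Real.exp (4*CK*(T-t))) :=
          step1.trans (step2.trans step3)
      _ = 2*Cφ*M*Real.exp (4*CK*T) := by rw [← hexp]; ring
  have hfin := intervalIntegral.norm_integral_le_of_norm_le_const hpt
  calc |∫ t in (0:ℝ)..T, ∫ x in I, f t x v' * (g t x v' - g t x v)|
      = ‖∫ t in (0:ℝ)..T, ∫ x in I, f t x v' * (g t x v' - g t x v)‖ :=
        (Real.norm_eq_abs _).symm
    _ ≤ 2*Cφ*M*Real.exp (4*CK*T) * |T - 0| := hfin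
    _ = 2 * Cφ * T * Real.exp (4*CK*T) * M := by
        rw [sub_zero, abs_of_pos hT]; ring

/-- `L¹` closeness of measurement test functions implies closeness of the
adjoint-represented measurement gradients:
`|∫₀ᵀ∫_I f(v')(ḡ(v') − ḡ(v)) dx dt| ≤ 2 C_φ T e^{4C_K T} ‖μ₂ − μ₁‖_{L¹}`, where `ḡ` is the
adjoint solution with final datum `μ₂ − μ₁`; in particular the gradient difference tends
to `0` along any sequence of test functions with `‖μ₂ − μ₁⁽ᵐ⁾‖_{L¹} → 0`. -/
theorem gradient_closeness_L1
    (T CK Cφ : ℝ) (hT : 0 < T) (hCK : 0 < CK) (hCφ : 0 ≤ Cφ)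
    (K : ℝ → ℝ → ℝ → ℝ)
    (hK_nonneg : ∀ x v v', 0 ≤ K x v v') (hK_bdd : ∀ x v v', K x v v' ≤ CK)
    (φ : ℝ → ℝ → ℝ) (hφ_bds : ∀ x v, 0 ≤ φ x v ∧ φ x v ≤ Cφ)
    (f : ℝ → ℝ → ℝ → ℝ) (hf : IsMildF T K φ (fun _ _ _ => 0) f)
    (μ₁ μ₂ : ℝ → ℝ) (hμ₁_int : Integrable μ₁) (hμ₂_int : Integrable μ₂)
    (gbar : ℝ → ℝ → ℝ → ℝ)
    (hgbar : IsMildG T K 1 (fun x _ => μ₂ x - μ₁ x) (fun _ _ _ => 0) gbar) :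
    (∀ I : Set ℝ, MeasurableSet I →
      ∀ v ∈ ({1, -1} : Set ℝ), ∀ v' ∈ ({1, -1} : Set ℝ),
        |∫ t in (0 : ℝ)..T, ∫ x in I, f t x v' * (gbar t x v' - gbar t x v)|
          ≤ 2 * Cφ * T * Real.exp (4 * CK * T) * ∫ x : ℝ, |μ₂ x - μ₁ x|) ∧
    (∀ (μseq : ℕ → ℝ → ℝ) (gseq : ℕ → ℝ → ℝ → ℝ → ℝ),
      (∀ m, Integrable (μseq m)) →
      (∀ m, IsMildG T K 1 (fun x _ => μ₂ x - μseq m x) (fun _ _ _ => 0) (gseq m)) →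
      Tendsto (fun m => ∫ x : ℝ, |μ₂ x - μseq m x|) atTop (nhds 0) →
      ∀ I : Set ℝ, MeasurableSet I →
        ∀ v ∈ ({1, -1} : Set ℝ), ∀ v' ∈ ({1, -1} : Set ℝ),
          Tendsto (fun m => ∫ t in (0 : ℝ)..T, ∫ x in I,
              f t x v' * (gseq m t x v' - gseq m t x v))
            atTop (nhds 0)) := by
  constructor
  · intro I hI v hv v' hv'
    exact key_bound T CK Cφ hT hCK hCφ K hK_nonneg hK_bdd φ hφ_bds f hf
      (fun x => μ₂ x - μ₁ x) (hμ₂_int.sub hμ₁_int) gbar hgbar I hI v hv v' hv'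
  · intro μseq gseq hμseq hgseq htend I hI v hv v' hv'
    rw [tendsto_zero_iff_abs_tendsto_zero]
    apply squeeze_zero (g := fun m => 2 * Cφ * T * Real.exp (4 * CK * T) *
        ∫ x : ℝ, |μ₂ x - μseq m x|) (fun m => abs_nonneg _)
    · intro m
      exact key_bound T CK Cφ hT hCK hCφ K hK_nonneg hK_bdd φ hφ_bds f hf
        (fun x => μ₂ x - μseq m x) (hμ₂_int.sub (hμseq m)) (gseq m) (hgseq m) I hI v hv v' hv'
    · have := htend.const_mul (2 * Cφ * T * Real.exp (4 * CK * T))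
      simpa using this
end
end

section
/- Let K be measurable with 0 ≤ K ≤ C_K, σ(x,v) = Σ_{v'∈V} K(x,v',v) and L̃(g)(t,x,v) = Σ_{v'∈V} K(x,v',v) g(t,x,v'). Suppose g_{prev} : [0,T] × ℝ × V → ℝ is measurable with S := ess sup_{t,v} ‖g_{prev}(t,·,v)‖_{L¹(ℝ)} < ∞, and let g be a mild solution of −∂_t g − v ∂_x g = −σ g + L̃(g_{prev}) with final datum 0. Then for all t ∈ [0,T]: max_v ‖g(t,·,v)‖_{L¹(ℝ)} ≤ (e^{2 C_K (T−t)} − 1) · S ≤ (e^{2 C_K T} − 1) · S. (This is the one-step contraction of the singular decomposition: each iterate g_n of the decomposition of the adjoint solution gains a factor e^{2C_KT} − 1 in L¹.) -/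
open MeasureTheory Real Set Filter

noncomputable section

open Topology


lemma integral_T_sub_pow (t T : ℝ) (k : ℕ) :
    ∫ s in t..T, (T - s)^k = (T-t)^(k+1)/(k+1) := by
  rw [intervalIntegral.integral_comp_sub_left (fun x => x^k) T]
  simp [integral_pow]

lemma gronwall_aux (T b S C : ℝ) (hb : 0 ≤ b) (hS : 0 ≤ S) (hC : 0 ≤ C)
    (u : ℝ → ℝ) (hu_meas : Measurable u)
    (hu_nonneg : ∀ s, 0 ≤ u s)
    (hu_bdd : ∀ s ∈ Icc (0:ℝ) T, u s ≤ C)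
    (hu_key : ∀ t ∈ Icc (0:ℝ) T, u t ≤ ∫ s in t..T, b * (u s + S)) :
    ∀ t ∈ Icc (0:ℝ) T, u t ≤ (Real.exp (b*(T-t)) - 1) * S := by
  have huint : ∀ t ∈ Icc (0:ℝ) T, IntervalIntegrable u volume t T := by
    intro t ht
    rw [intervalIntegrable_iff_integrableOn_Ioc_of_le ht.2]
    apply Integrable.mono' (integrable_const C) hu_meas.aestronglyMeasurable
    filter_upwards [ae_restrict_mem measurableSet_Ioc] with s hs
    rw [Real.norm_eq_abs, abs_of_nonneg (hu_nonneg s)]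
    exact hu_bdd s ⟨ht.1.trans hs.1.le, hs.2⟩
  have main : ∀ n : ℕ, ∀ t ∈ Icc (0:ℝ) T,
      u t + S ≤ S * (∑ k ∈ Finset.range n, (b*(T-t))^k / (k.factorial : ℝ))
        + (C+S) * ((b*(T-t))^n / (n.factorial : ℝ)) := by
    intro n
    induction n with
    | zero =>
      intro t ht
      simp only [Finset.range_zero, Finset.sum_empty, mul_zero, pow_zero,
        Nat.factorial_zero, Nat.cast_one, div_one, mul_one, zero_add]
      linarith [hu_bdd t ht]
    | succ n ih =>
      intro t ht
      set φ : ℝ → ℝ := fun s => S * (∑ k ∈ Finset.range n, (b*(T-s))^k / (k.factorial : ℝ))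
        + (C+S) * ((b*(T-s))^n / (n.factorial : ℝ)) with hφ
      have hφcont : Continuous φ := by
        apply Continuous.add
        · exact continuous_const.mul (continuous_finset_sum _ fun k _ =>
            ((continuous_const.mul (continuous_const.sub continuous_id)).pow k).div_const _)
        · exact continuous_const.mul
            (((continuous_const.mul (continuous_const.sub continuous_id)).pow n).div_const _)
      have h1 : u t ≤ ∫ s in t..T, b * (u s + S) := hu_key t ht
      have h2 : (∫ s in t..T, b * (u s + S)) ≤ ∫ s in t..T, b * φ s := by
        apply intervalIntegral.integral_mono_on ht.2
          (((huint t ht).add (intervalIntegrable_const)).const_mul b)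
          ((continuous_const.mul hφcont).intervalIntegrable _ _)
        intro s hs
        have hsI : s ∈ Icc (0:ℝ) T := ⟨ht.1.trans hs.1, hs.2⟩
        have := ih s hsI
        have h0 : u s + S ≤ φ s := this
        exact mul_le_mul_of_nonneg_left h0 hb
      have hrep : ∀ s : ℝ, b * φ s
          = (∑ k ∈ Finset.range n, (S * b^(k+1) / (k.factorial : ℝ)) * (T-s)^k)
            + ((C+S) * b^(n+1) / (n.factorial : ℝ)) * (T-s)^n := by
        intro s
        simp only [hφ, mul_add, Finset.mul_sum]
        congr 1
        · exact Finset.sum_congr rfl fun k _ => by rw [mul_pow]; ring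
        · rw [mul_pow]; ring
      have h3 : (∫ s in t..T, b * φ s)
          = (∑ k ∈ Finset.range n, (S * b^(k+1) / (k.factorial : ℝ)) * ((T-t)^(k+1)/(k+1)))
            + ((C+S) * b^(n+1) / (n.factorial : ℝ)) * ((T-t)^(n+1)/(n+1)) := by
        simp only [hrep]
        have hint1 : IntervalIntegrable
            (fun s => ∑ k ∈ Finset.range n, S * b^(k+1)/(k.factorial:ℝ) * (T-s)^k)
            volume t T := by
          apply Continuous.intervalIntegrable
          exact continuous_finset_sum _ fun k _ =>
            continuous_const.mul ((continuous_const.sub continuous_id).pow k)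
        have hint2 : IntervalIntegrable
            (fun s => (C+S) * b^(n+1)/(n.factorial:ℝ) * (T-s)^n) volume t T := by
          apply Continuous.intervalIntegrable
          exact continuous_const.mul ((continuous_const.sub continuous_id).pow n)
        have hintk : ∀ k ∈ Finset.range n, IntervalIntegrable
            (fun s => S * b^(k+1)/(k.factorial:ℝ) * (T-s)^k) volume t T := by
          intro k _
          apply Continuous.intervalIntegrable
          exact continuous_const.mul ((continuous_const.sub continuous_id).pow k)
        rw [intervalIntegral.integral_add hint1 hint2,
          intervalIntegral.integral_finset_sum hintk]
        simp only [intervalIntegral.integral_const_mul, integral_T_sub_pow]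
      have hfin : S + ((∑ k ∈ Finset.range n, (S * b^(k+1) / (k.factorial : ℝ)) * ((T-t)^(k+1)/(k+1)))
            + ((C+S) * b^(n+1) / (n.factorial : ℝ)) * ((T-t)^(n+1)/(n+1)))
          = S * (∑ k ∈ Finset.range (n+1), (b*(T-t))^k / (k.factorial : ℝ))
            + (C+S) * ((b*(T-t))^(n+1) / ((n+1).factorial : ℝ)) := by
        rw [Finset.sum_range_succ', mul_add, Finset.mul_sum]
        have hterm : ∀ k : ℕ, (S * b^(k+1) / (k.factorial : ℝ)) * ((T-t)^(k+1)/(k+1))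
            = S * ((b*(T-t))^(k+1) / ((k+1).factorial : ℝ)) := by
          intro k
          have hk : ((k.factorial : ℝ)) ≠ 0 := Nat.cast_ne_zero.2 k.factorial_ne_zero
          have hk1 : ((k:ℝ) + 1) ≠ 0 := by positivity
          rw [mul_pow, Nat.factorial_succ]
          push_cast
          field_simp
        have hrem : ((C+S) * b^(n+1) / (n.factorial : ℝ)) * ((T-t)^(n+1)/(n+1))
            = (C+S) * ((b*(T-t))^(n+1) / ((n+1).factorial : ℝ)) := by
          have hk : ((n.factorial : ℝ)) ≠ 0 := Nat.cast_ne_zero.2 n.factorial_ne_zero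
          rw [mul_pow, Nat.factorial_succ]
          push_cast
          field_simp
        simp only [hterm, hrem]
        simp only [pow_zero, Nat.factorial_zero, Nat.cast_one, div_one, mul_one]
        ring
      linarith [h1, h2, h3.le, hfin.ge]
  intro t ht
  set r := b * (T - t) with hr
  have h1 : HasSum (fun k : ℕ => r^k / (k.factorial : ℝ)) (Real.exp r) := by
    rw [Real.exp_eq_exp_ℝ]
    exact NormedSpace.expSeries_div_hasSum_exp r
  have h2 : Tendsto (fun n => ∑ k ∈ Finset.range n, r^k / (k.factorial : ℝ))
      atTop (𝓝 (Real.exp r)) := h1.tendsto_sum_nat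
  have h3 : Tendsto (fun n : ℕ => r^n / (n.factorial : ℝ)) atTop (𝓝 0) :=
    h1.summable.tendsto_atTop_zero
  have h4 : Tendsto (fun n : ℕ => S * (∑ k ∈ Finset.range n, r^k / (k.factorial : ℝ))
      + (C+S) * (r^n / (n.factorial : ℝ))) atTop (𝓝 (S * Real.exp r + (C+S) * 0)) :=
    (h2.const_mul S).add (h3.const_mul (C+S))
  have h5 : u t + S ≤ S * Real.exp r + (C+S) * 0 :=
    ge_of_tendsto' h4 (fun n => main n t ht)
  have : u t ≤ (Real.exp r - 1) * S := by nlinarith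
  exact this

/-- one-step contraction of the singular decomposition of the adjoint
solution: if `g` is a mild solution of `−∂ₜg − v ∂ₓg = −σ g + L̃(g_prev)` with zero final
datum and `‖g_prev(t,·,v)‖_{L¹} ≤ S` uniformly, then
`max_v ‖g(t,·,v)‖_{L¹} ≤ (e^{2C_K(T−t)} − 1) S ≤ (e^{2C_K T} − 1) S`. -/
theorem singular_decomposition_contraction
    (T CK S : ℝ) (hT : 0 < T) (hCK : 0 < CK)
    (K : ℝ → ℝ → ℝ → ℝ)
    (hK_nonneg : ∀ x v v', 0 ≤ K x v v') (hK_bdd : ∀ x v v', K x v v' ≤ CK)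
    (gprev : ℝ → ℝ → ℝ → ℝ)
    (hgprev_meas : Measurable fun p : ℝ × ℝ × ℝ => gprev p.1 p.2.1 p.2.2)
    (hgprev_int : ∀ t ∈ Set.Icc (0 : ℝ) T, ∀ v ∈ ({1, -1} : Set ℝ),
      Integrable (fun x => gprev t x v))
    (hgprev_L1 : ∀ t ∈ Set.Icc (0 : ℝ) T, ∀ v ∈ ({1, -1} : Set ℝ),
      (∫ x : ℝ, |gprev t x v|) ≤ S)
    (g : ℝ → ℝ → ℝ → ℝ)
    (hg : IsMildG T K 0 (fun _ _ => 0)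
      (fun s x v => K x 1 v * gprev s x 1 + K x (-1) v * gprev s x (-1)) g) :
    ∀ t ∈ Set.Icc (0 : ℝ) T, ∀ v ∈ ({1, -1} : Set ℝ),
      (∫ x : ℝ, |g t x v|) ≤ (Real.exp (2 * CK * (T - t)) - 1) * S ∧
      (∫ x : ℝ, |g t x v|) ≤ (Real.exp (2 * CK * T) - 1) * S := by
  obtain ⟨hg_meas, hg_int, ⟨C, hC⟩, hmild⟩ := hg
  have h1mem : (1:ℝ) ∈ ({1, -1} : Set ℝ) := by simp
  have hm1mem : (-1:ℝ) ∈ ({1, -1} : Set ℝ) := by simp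
  have h0mem : (0:ℝ) ∈ Icc (0:ℝ) T := ⟨le_refl 0, hT.le⟩
  have hS : 0 ≤ S :=
    le_trans (integral_nonneg fun x => abs_nonneg _) (hgprev_L1 0 h0mem 1 h1mem)
  have hC0 : 0 ≤ C :=
    le_trans (integral_nonneg fun x => abs_nonneg _) (hC 0 h0mem 1 h1mem)
  have key : ∀ v ∈ ({1, -1} : Set ℝ), ∀ t ∈ Icc (0:ℝ) T,
      (∫ x : ℝ, |g t x v|) ≤ (Real.exp (2*CK*(T-t)) - 1) * S := by
    intro v hv
    set u : ℝ → ℝ := fun s => ∫ x : ℝ, |g s x v| with hu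
    have hgv : Measurable (fun p : ℝ × ℝ => g p.1 p.2 v) :=
      hg_meas.comp (measurable_fst.prodMk (measurable_snd.prodMk measurable_const))
    have hgpv : ∀ w : ℝ, Measurable (fun p : ℝ × ℝ => gprev p.1 p.2 w) := fun w =>
      hgprev_meas.comp (measurable_fst.prodMk (measurable_snd.prodMk measurable_const))
    have hu_meas : Measurable u :=
      (hgv.abs.stronglyMeasurable.integral_prod_right').measurable
    have hu_nonneg : ∀ s, 0 ≤ u s := fun s => integral_nonneg fun x => abs_nonneg _
    have hu_bdd : ∀ s ∈ Icc (0:ℝ) T, u s ≤ C := fun s hs => hC s hs v hv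
    -- the abstract nonnegative dominating kernel
    set A : ℝ → ℝ → ℝ := fun s y =>
      2*CK*|g s y v| + CK*|gprev s y 1| + CK*|gprev s y (-1)| with hA
    have hA_nonneg : ∀ s y, 0 ≤ A s y := by
      intro s y
      have h1 := abs_nonneg (g s y v); have h2 := abs_nonneg (gprev s y 1)
      have h3 := abs_nonneg (gprev s y (-1))
      have := hCK.le
      simp only [hA]
      nlinarith
    have hA_meas : Measurable (fun q : ℝ × ℝ => A q.1 q.2) := by
      simp only [hA]
      exact ((((hgv.abs).const_mul (2*CK)).add (((hgpv 1).abs).const_mul CK)).add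
        (((hgpv (-1)).abs).const_mul CK))
    have hu_key : ∀ t ∈ Icc (0:ℝ) T, u t ≤ ∫ s in t..T, (2*CK) * (u s + S) := by
      intro t ht
      -- pointwise bound on |g t x v| in ℝ≥0∞
      have hpt : ∀ x : ℝ, ‖g t x v‖ₑ ≤
          ∫⁻ s in Ioc t T, ENNReal.ofReal (A s (x + v*(s-t))) := by
        intro x
        have hEq := hmild t ht x v hv
        simp only [zero_add] at hEq
        rw [intervalIntegral.integral_of_le ht.2] at hEq
        rw [hEq]
        refine le_trans (enorm_integral_le_lintegral_enorm _) (lintegral_mono fun s => ?_)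
        set y := x + v*(s-t) with hy
        rw [Real.enorm_eq_ofReal_abs]
        apply ENNReal.ofReal_le_ofReal
        have hk1 := hK_nonneg y 1 v
        have hk2 := hK_nonneg y (-1) v
        have hk1' := hK_bdd y 1 v
        have hk2' := hK_bdd y (-1) v
        have e0 : 0 * (K y 1 v * g s y 1 + K y (-1) v * g s y (-1))
            - (K y 1 v + K y (-1) v) * g s y v
            + (K y 1 v * gprev s y 1 + K y (-1) v * gprev s y (-1))
            = (K y 1 v * gprev s y 1 + K y (-1) v * gprev s y (-1))
              - (K y 1 v + K y (-1) v) * g s y v := by ring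
        have t3 : |0 * (K y 1 v * g s y 1 + K y (-1) v * g s y (-1))
            - (K y 1 v + K y (-1) v) * g s y v
            + (K y 1 v * gprev s y 1 + K y (-1) v * gprev s y (-1))|
            ≤ |K y 1 v * gprev s y 1 + K y (-1) v * gprev s y (-1)|
              + |(K y 1 v + K y (-1) v) * g s y v| := by
          rw [e0]; exact abs_sub _ _
        have t1 : |K y 1 v * gprev s y 1 + K y (-1) v * gprev s y (-1)|
            ≤ CK*|gprev s y 1| + CK*|gprev s y (-1)| := by
          calc |K y 1 v * gprev s y 1 + K y (-1) v * gprev s y (-1)|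
              ≤ |K y 1 v * gprev s y 1| + |K y (-1) v * gprev s y (-1)| := abs_add_le _ _
            _ = K y 1 v * |gprev s y 1| + K y (-1) v * |gprev s y (-1)| := by
                rw [abs_mul, abs_mul, abs_of_nonneg hk1, abs_of_nonneg hk2]
            _ ≤ CK*|gprev s y 1| + CK*|gprev s y (-1)| :=
                add_le_add (mul_le_mul_of_nonneg_right hk1' (abs_nonneg _))
                  (mul_le_mul_of_nonneg_right hk2' (abs_nonneg _))
        have t2 : |(K y 1 v + K y (-1) v) * g s y v| ≤ 2*CK*|g s y v| := by
          rw [abs_mul, abs_of_nonneg (by linarith)]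
          exact mul_le_mul_of_nonneg_right (by linarith) (abs_nonneg _)
        simp only [hA]
        linarith
      have hofReal_u : ENNReal.ofReal (u t) = ∫⁻ x, ENNReal.ofReal |g t x v| := by
        simp only [hu]
        rw [ofReal_integral_eq_lintegral_ofReal ((hg_int t ht v hv).abs)
          (Eventually.of_forall fun x => abs_nonneg _)]
      have step1 : ENNReal.ofReal (u t) ≤
          ∫⁻ x : ℝ, ∫⁻ s in Ioc t T, ENNReal.ofReal (A s (x + v*(s-t))) := by
        rw [hofReal_u]
        refine lintegral_mono fun x => ?_
        rw [← Real.enorm_eq_ofReal_abs]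
        exact hpt x
      have hBmeas : AEMeasurable
          (Function.uncurry fun (x s : ℝ) => ENNReal.ofReal (A s (x + v*(s-t))))
          (volume.prod (volume.restrict (Ioc t T))) := by
        apply Measurable.aemeasurable
        apply Measurable.ennreal_ofReal
        exact hA_meas.comp ((measurable_snd).prodMk
          (measurable_fst.add ((measurable_snd.sub measurable_const).const_mul v)))
      have step2 : (∫⁻ x : ℝ, ∫⁻ s in Ioc t T, ENNReal.ofReal (A s (x + v*(s-t))))
          = ∫⁻ s in Ioc t T, ∫⁻ x : ℝ, ENNReal.ofReal (A s (x + v*(s-t))) :=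
        lintegral_lintegral_swap hBmeas
      have step3 : ∀ s : ℝ, (∫⁻ x : ℝ, ENNReal.ofReal (A s (x + v*(s-t))))
          = ∫⁻ y : ℝ, ENNReal.ofReal (A s y) := fun s =>
        lintegral_add_right_eq_self (fun y => ENNReal.ofReal (A s y)) (v*(s-t))
      have step4 : ∀ s ∈ Ioc t T, (∫⁻ y : ℝ, ENNReal.ofReal (A s y))
          ≤ ENNReal.ofReal ((2*CK) * (u s + S)) := by
        intro s hs
        have hsI : s ∈ Icc (0:ℝ) T := ⟨ht.1.trans hs.1.le, hs.2⟩
        have hint1 : Integrable (fun y => A s y) := by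
          simp only [hA]
          exact ((((hg_int s hsI v hv).abs).const_mul (2*CK)).add
            (((hgprev_int s hsI 1 h1mem).abs).const_mul CK)).add
            (((hgprev_int s hsI (-1) hm1mem).abs).const_mul CK)
        rw [← ofReal_integral_eq_lintegral_ofReal hint1
          (Eventually.of_forall fun y => hA_nonneg s y)]
        apply ENNReal.ofReal_le_ofReal
        have i1 : Integrable (fun y : ℝ => 2*CK*|g s y v|) :=
          ((hg_int s hsI v hv).abs).const_mul (2*CK)
        have i2 : Integrable (fun y : ℝ => CK*|gprev s y 1|) :=
          ((hgprev_int s hsI 1 h1mem).abs).const_mul CK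
        have i3 : Integrable (fun y : ℝ => CK*|gprev s y (-1)|) :=
          ((hgprev_int s hsI (-1) hm1mem).abs).const_mul CK
        have i12 : Integrable (fun y : ℝ => 2*CK*|g s y v| + CK*|gprev s y 1|) := i1.add i2
        have hsplit : (∫ y : ℝ, A s y) = 2*CK * u s
            + CK * (∫ y : ℝ, |gprev s y 1|) + CK * ∫ y : ℝ, |gprev s y (-1)| := by
          simp only [hA]
          rw [integral_add i12 i3, integral_add i1 i2,
            integral_const_mul, integral_const_mul, integral_const_mul]
        have b1 := hgprev_L1 s hsI 1 h1mem
        have b2 := hgprev_L1 s hsI (-1) hm1mem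
        have m1 : CK * (∫ y : ℝ, |gprev s y 1|) ≤ CK * S :=
          mul_le_mul_of_nonneg_left b1 hCK.le
        have m2 : CK * (∫ y : ℝ, |gprev s y (-1)|) ≤ CK * S :=
          mul_le_mul_of_nonneg_left b2 hCK.le
        rw [hsplit]
        ring_nf
        nlinarith
      have step5 : (∫⁻ s in Ioc t T, ∫⁻ x : ℝ, ENNReal.ofReal (A s (x + v*(s-t))))
          ≤ ∫⁻ s in Ioc t T, ENNReal.ofReal ((2*CK)*(u s + S)) := by
        apply lintegral_mono_ae
        filter_upwards [ae_restrict_mem measurableSet_Ioc] with s hs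
        rw [step3 s]
        exact step4 s hs
      have hw_int : IntegrableOn (fun s => (2*CK)*(u s + S)) (Ioc t T) volume := by
        apply Integrable.mono' (integrable_const ((2*CK)*(C+S)))
        · exact ((hu_meas.add measurable_const).const_mul (2*CK)).aestronglyMeasurable
        · filter_upwards [ae_restrict_mem measurableSet_Ioc] with s hs
          have hsI : s ∈ Icc (0:ℝ) T := ⟨ht.1.trans hs.1.le, hs.2⟩
          have h1 := hu_nonneg s
          have h2 := hu_bdd s hsI
          rw [Real.norm_eq_abs, abs_of_nonneg (by nlinarith)]
          nlinarith
      have step6 : (∫⁻ s in Ioc t T, ENNReal.ofReal ((2*CK)*(u s + S)))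
          = ENNReal.ofReal (∫ s in Ioc t T, (2*CK)*(u s + S)) := by
        rw [ofReal_integral_eq_lintegral_ofReal hw_int]
        filter_upwards [] with s
        simp only [Pi.zero_apply]
        have := hu_nonneg s
        nlinarith
      have final : ENNReal.ofReal (u t) ≤ ENNReal.ofReal (∫ s in Ioc t T, (2*CK)*(u s + S)) := by
        calc ENNReal.ofReal (u t)
            ≤ ∫⁻ x : ℝ, ∫⁻ s in Ioc t T, ENNReal.ofReal (A s (x + v*(s-t))) := step1
          _ = ∫⁻ s in Ioc t T, ∫⁻ x : ℝ, ENNReal.ofReal (A s (x + v*(s-t))) := step2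
          _ ≤ ∫⁻ s in Ioc t T, ENNReal.ofReal ((2*CK)*(u s + S)) := step5
          _ = ENNReal.ofReal (∫ s in Ioc t T, (2*CK)*(u s + S)) := step6
      have hRHSnn : 0 ≤ ∫ s in Ioc t T, (2*CK)*(u s + S) :=
        setIntegral_nonneg measurableSet_Ioc fun s _ => by nlinarith [hu_nonneg s]
      rw [intervalIntegral.integral_of_le ht.2]
      exact (ENNReal.ofReal_le_ofReal_iff hRHSnn).1 final
    exact gronwall_aux T (2*CK) S C (by linarith) hS hC0 u hu_meas hu_nonneg hu_bdd hu_key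
  intro t ht v hv
  refine ⟨key v hv t ht, le_trans (key v hv t ht) ?_⟩
  apply mul_le_mul_of_nonneg_right _ hS
  have hmono : 2*CK*(T-t) ≤ 2*CK*T := by nlinarith [ht.1]
  have := Real.exp_le_exp.2 hmono
  linarith
end
end
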